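/- arXiv:2210.05761 — 8 statements merged into one kernel-verified Lean document; each statement's English description precedes it below -/
import Mathlib

section
/- Let (H, 𝒰, ℰ, 𝒥, σ) be a Z-problem with σ self-adjoint, σ₁₁ ≥ 0, and σ₁₁ boundedly invertible, and set σ⁎ = σ₀₀ − σ₀₁σ₁₁⁻¹σ₁₀. Then σ⁎ is self-adjoint, for every E₀ ∈ 𝒰 the quantity ⟨E₀, σ⁎E₀⟩ equals the minimum over E ∈ ℰ of ⟨E₀ + E, σ(E₀ + E)⟩ (these inner products are real), the minimizer is unique and equals E = −σ₁₁⁻¹σ₁₀E₀, and σ⁎ ≤ σ₀₀. -/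
/-- The Schur complement `σ₀₀ - σ₀₁ σ₁₁⁻¹ σ₁₀` of a bounded operator `σ` with respect to
orthogonal projections `P0, P1`, where `ρ` is the inverse of the block
`σ₁₁ = P1 σ P1 : H₁ → H₁` extended by zero. -/
noncomputable def schurCLM {𝕂 : Type*} [RCLike 𝕂] {H : Type*} [NormedAddCommGroup H]
    [InnerProductSpace 𝕂 H] (P0 P1 σ ρ : H →L[𝕂] H) : H →L[𝕂] H :=
  (P0 ∘L (σ ∘L P0)) - (P0 ∘L (σ ∘L P1)) ∘L (ρ ∘L (P1 ∘L (σ ∘L P0)))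

/-- Dirichlet minimization principle for a Z-problem `(H, 𝒰, ℰ, 𝒥, σ)`
(encoded by mutually orthogonal projections `P0, P1, P2` with sum `1` and ranges
`𝒰, ℰ, 𝒥`): if `σ` is self-adjoint, `σ₁₁ ≥ 0` and `σ₁₁` is boundedly invertible with
inverse `ρ`, then `σ⁎ = σ₀₀ - σ₀₁σ₁₁⁻¹σ₁₀` is self-adjoint, `⟨E₀, σ⁎E₀⟩` is the minimum of
`⟨E₀+E, σ(E₀+E)⟩` over `E ∈ ℰ`, the minimizer is unique, equal to `-σ₁₁⁻¹σ₁₀E₀`, and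
`σ⁎ ≤ σ₀₀`. -/
theorem stmt_2
    {𝕂 : Type*} [RCLike 𝕂]
    {H : Type*} [NormedAddCommGroup H] [InnerProductSpace 𝕂 H] [CompleteSpace H]
    (P0 P1 P2 : H →L[𝕂] H)
    (hP0 : P0 ∘L P0 = P0) (hP0sa : ContinuousLinearMap.adjoint P0 = P0)
    (hP1 : P1 ∘L P1 = P1) (hP1sa : ContinuousLinearMap.adjoint P1 = P1)
    (hP2 : P2 ∘L P2 = P2) (hP2sa : ContinuousLinearMap.adjoint P2 = P2)
    (h01 : P0 ∘L P1 = 0) (h02 : P0 ∘L P2 = 0) (h12 : P1 ∘L P2 = 0)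
    (hsum : P0 + P1 + P2 = 1)
    (σ : H →L[𝕂] H) (hσ : ContinuousLinearMap.adjoint σ = σ)
    (hpos11 : ∀ y : H, 0 ≤ RCLike.re (inner 𝕂 y ((P1 ∘L (σ ∘L P1)) y) : 𝕂))
    (ρ : H →L[𝕂] H)
    (hρ : P1 ∘L (ρ ∘L P1) = ρ)
    (hρl : ρ ∘L (P1 ∘L (σ ∘L P1)) = P1)
    (hρr : (P1 ∘L (σ ∘L P1)) ∘L ρ = P1) :
    ContinuousLinearMap.adjoint (schurCLM P0 P1 σ ρ) = schurCLM P0 P1 σ ρ ∧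
    (∀ E₀ : H, P0 E₀ = E₀ →
      IsLeast {r : ℝ | ∃ E : H, P1 E = E ∧ r = RCLike.re (inner 𝕂 (E₀ + E) (σ (E₀ + E)) : 𝕂)}
        (RCLike.re (inner 𝕂 E₀ (schurCLM P0 P1 σ ρ E₀) : 𝕂)) ∧
      (∀ E : H, P1 E = E →
        (RCLike.re (inner 𝕂 (E₀ + E) (σ (E₀ + E)) : 𝕂) =
            RCLike.re (inner 𝕂 E₀ (schurCLM P0 P1 σ ρ E₀) : 𝕂) ↔
          E = -(ρ ((P1 ∘L (σ ∘L P0)) E₀))))) ∧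
    (∀ z : H, 0 ≤ RCLike.re (inner 𝕂 z (((P0 ∘L (σ ∘L P0)) - schurCLM P0 P1 σ ρ) z) : 𝕂)) := by
  -- pointwise "move across inner 𝕂 product" facts
  have mv : ∀ A : H →L[𝕂] H, ContinuousLinearMap.adjoint A = A →
      ∀ x y : H, (inner 𝕂 (A x) y : 𝕂) = inner 𝕂 x (A y) := by
    intro A hA x y
    conv_lhs => rw [← hA]
    exact ContinuousLinearMap.adjoint_inner_left A y x
  have hσp := mv σ hσ
  have hP0p := mv P0 hP0sa
  have hP1p := mv P1 hP1sa
  have hP1i : ∀ x : H, P1 (P1 x) = P1 x := by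
    intro x; simpa using ContinuousLinearMap.ext_iff.mp hP1 x
  have hρp : ∀ x : H, ρ x = P1 (ρ (P1 x)) := by
    intro x; simpa using (ContinuousLinearMap.ext_iff.mp hρ x).symm
  have hρP1l : ∀ x : H, P1 (ρ x) = ρ x := by
    intro x
    calc P1 (ρ x) = P1 (P1 (ρ (P1 x))) := by rw [← hρp]
      _ = P1 (ρ (P1 x)) := hP1i _
      _ = ρ x := (hρp x).symm
  have hρlp : ∀ x : H, ρ (P1 (σ (P1 x))) = P1 x := by
    intro x; simpa using ContinuousLinearMap.ext_iff.mp hρl x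
  have hρrp : ∀ x : H, P1 (σ (P1 (ρ x))) = P1 x := by
    intro x; simpa using ContinuousLinearMap.ext_iff.mp hρr x
  have hS11p : ∀ x y : H, (inner 𝕂 (P1 (σ (P1 x))) y : 𝕂) = inner 𝕂 x (P1 (σ (P1 y))) := by
    intro x y
    rw [hP1p, hσp, hP1p]
  have hρsym : ∀ x y : H, (inner 𝕂 (ρ x) y : 𝕂) = inner 𝕂 x (ρ y) := by
    intro x y
    calc (inner 𝕂 (ρ x) y : 𝕂) = inner 𝕂 (P1 (ρ x)) y := by rw [hρP1l]
      _ = inner 𝕂 (ρ x) (P1 y) := hP1p _ _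
      _ = inner 𝕂 (ρ x) (P1 (σ (P1 (ρ y)))) := by rw [hρrp]
      _ = inner 𝕂 (P1 (σ (P1 (ρ x)))) (ρ y) := (hS11p _ _).symm
      _ = inner 𝕂 (P1 x) (ρ y) := by rw [hρrp]
      _ = inner 𝕂 x (P1 (ρ y)) := hP1p _ _
      _ = inner 𝕂 x (ρ y) := by rw [hρP1l]
  have hpos11' : ∀ y : H, 0 ≤ RCLike.re (inner 𝕂 y (P1 (σ (P1 y))) : 𝕂) := by
    intro y; simpa using hpos11 y
  -- self-adjointness of the Schur complement
  have hAdj : ContinuousLinearMap.adjoint (schurCLM P0 P1 σ ρ) = schurCLM P0 P1 σ ρ := by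
    refine ((ContinuousLinearMap.eq_adjoint_iff _ _).mpr ?_).symm
    intro x y
    simp only [schurCLM, ContinuousLinearMap.sub_apply, ContinuousLinearMap.comp_apply,
      inner_sub_left, inner_sub_right]
    congr 1
    · rw [hP0p, hσp, hP0p]
    · rw [hP0p, hσp, hP1p, hρsym, hP1p, hσp, hP0p]
  -- key decomposition identity
  have key : ∀ E₀ E : H, P0 E₀ = E₀ → P1 E = E →
      (inner 𝕂 (E₀ + E) (σ (E₀ + E)) : 𝕂) =
        inner 𝕂 E₀ (schurCLM P0 P1 σ ρ E₀) +
        inner 𝕂 (E + ρ (P1 (σ E₀))) ((P1 ∘L (σ ∘L P1)) (E + ρ (P1 (σ E₀)))) := by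
    intro E₀ E h0 h1E
    have hρuP1 : P1 (ρ (P1 (σ E₀))) = ρ (P1 (σ E₀)) := hρP1l _
    have hS11ρu : P1 (σ (P1 (ρ (P1 (σ E₀))))) = P1 (σ E₀) := by
      rw [hρrp, hP1i]
    have t1 : (inner 𝕂 E₀ (σ E) : 𝕂) = inner 𝕂 (P1 (σ E₀)) E := by
      calc (inner 𝕂 E₀ (σ E) : 𝕂) = inner 𝕂 (σ E₀) E := (hσp E₀ E).symm
        _ = inner 𝕂 (σ E₀) (P1 E) := by rw [h1E]
        _ = inner 𝕂 (P1 (σ E₀)) E := by rw [hP1p, h1E]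
    have t2 : (inner 𝕂 E (σ E₀) : 𝕂) = inner 𝕂 E (P1 (σ E₀)) := by
      calc (inner 𝕂 E (σ E₀) : 𝕂) = inner 𝕂 (P1 E) (σ E₀) := by rw [h1E]
        _ = inner 𝕂 E (P1 (σ E₀)) := hP1p _ _
    have s1 : (inner 𝕂 E (P1 (σ (P1 E))) : 𝕂) = inner 𝕂 E (σ E) := by
      calc (inner 𝕂 E (P1 (σ (P1 E))) : 𝕂) = inner 𝕂 (P1 E) (σ (P1 E)) := (hP1p _ _).symm
        _ = inner 𝕂 E (σ E) := by rw [h1E]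
    have s3 : (inner 𝕂 (ρ (P1 (σ E₀))) (P1 (σ (P1 E))) : 𝕂) = inner 𝕂 (P1 (σ E₀)) E := by
      calc (inner 𝕂 (ρ (P1 (σ E₀))) (P1 (σ (P1 E))) : 𝕂)
          = inner 𝕂 (P1 (σ (P1 (ρ (P1 (σ E₀)))))) E := (hS11p _ _).symm
        _ = inner 𝕂 (P1 (σ E₀)) E := by rw [hS11ρu]
    have s4 : (inner 𝕂 (ρ (P1 (σ E₀))) (P1 (σ (P1 (ρ (P1 (σ E₀)))))) : 𝕂)
        = inner 𝕂 (P1 (σ E₀)) (ρ (P1 (σ E₀))) := by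
      calc (inner 𝕂 (ρ (P1 (σ E₀))) (P1 (σ (P1 (ρ (P1 (σ E₀)))))) : 𝕂)
          = inner 𝕂 (P1 (σ (P1 (ρ (P1 (σ E₀)))))) (ρ (P1 (σ E₀))) := (hS11p _ _).symm
        _ = inner 𝕂 (P1 (σ E₀)) (ρ (P1 (σ E₀))) := by rw [hS11ρu]
    have hSch : (inner 𝕂 E₀ (schurCLM P0 P1 σ ρ E₀) : 𝕂)
        = inner 𝕂 E₀ (σ E₀) - inner 𝕂 (P1 (σ E₀)) (ρ (P1 (σ E₀))) := by
      simp only [schurCLM, ContinuousLinearMap.sub_apply, ContinuousLinearMap.comp_apply, h0,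
        inner_sub_right]
      congr 1
      · calc (inner 𝕂 E₀ (P0 (σ E₀)) : 𝕂) = inner 𝕂 (P0 E₀) (σ E₀) := (hP0p _ _).symm
          _ = inner 𝕂 E₀ (σ E₀) := by rw [h0]
      · calc (inner 𝕂 E₀ (P0 (σ (P1 (ρ (P1 (σ E₀))))))  : 𝕂)
            = inner 𝕂 (P0 E₀) (σ (P1 (ρ (P1 (σ E₀))))) := (hP0p _ _).symm
          _ = inner 𝕂 E₀ (σ (ρ (P1 (σ E₀)))) := by rw [h0, hρuP1]
          _ = inner 𝕂 (σ E₀) (ρ (P1 (σ E₀))) := (hσp _ _).symm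
          _ = inner 𝕂 (σ E₀) (P1 (ρ (P1 (σ E₀)))) := by rw [hρuP1]
          _ = inner 𝕂 (P1 (σ E₀)) (ρ (P1 (σ E₀))) := by rw [hP1p, hρuP1]
    have hQ : (inner 𝕂 (E + ρ (P1 (σ E₀))) ((P1 ∘L (σ ∘L P1)) (E + ρ (P1 (σ E₀)))) : 𝕂)
        = inner 𝕂 E (σ E) + inner 𝕂 E (P1 (σ E₀)) + inner 𝕂 (P1 (σ E₀)) E
            + inner 𝕂 (P1 (σ E₀)) (ρ (P1 (σ E₀))) := by
      simp only [ContinuousLinearMap.comp_apply, map_add, inner_add_left, inner_add_right]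
      rw [s1, s3, s4, hS11ρu]
      ring
    calc (inner 𝕂 (E₀ + E) (σ (E₀ + E)) : 𝕂)
        = inner 𝕂 E₀ (σ E₀) + inner 𝕂 (P1 (σ E₀)) E + inner 𝕂 E (P1 (σ E₀)) + inner 𝕂 E (σ E) := by
          rw [map_add, inner_add_left, inner_add_right, inner_add_right, t1, t2]
          ring
      _ = (inner 𝕂 E₀ (σ E₀) - inner 𝕂 (P1 (σ E₀)) (ρ (P1 (σ E₀))))
            + (inner 𝕂 E (σ E) + inner 𝕂 E (P1 (σ E₀)) + inner 𝕂 (P1 (σ E₀)) E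
                + inner 𝕂 (P1 (σ E₀)) (ρ (P1 (σ E₀)))) := by ring
      _ = inner 𝕂 E₀ (schurCLM P0 P1 σ ρ E₀) +
            inner 𝕂 (E + ρ (P1 (σ E₀))) ((P1 ∘L (σ ∘L P1)) (E + ρ (P1 (σ E₀)))) := by
          rw [hSch, hQ]
  have keyRe : ∀ E₀ E : H, P0 E₀ = E₀ → P1 E = E →
      RCLike.re (inner 𝕂 (E₀ + E) (σ (E₀ + E)) : 𝕂) =
        RCLike.re (inner 𝕂 E₀ (schurCLM P0 P1 σ ρ E₀) : 𝕂) +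
        RCLike.re (inner 𝕂 (E + ρ (P1 (σ E₀)))
          ((P1 ∘L (σ ∘L P1)) (E + ρ (P1 (σ E₀)))) : 𝕂) := by
    intro E₀ E h0 h1E
    rw [key E₀ E h0 h1E, map_add]
  -- vanishing quadratic form forces zero
  have hzero : ∀ w : H, P1 w = w → RCLike.re (inner 𝕂 w (P1 (σ (P1 w))) : 𝕂) = 0 → w = 0 := by
    intro w hw h0
    have hB : ∀ x : H, RCLike.re (inner 𝕂 x (P1 (σ (P1 w))) : 𝕂) = 0 := by
      intro x
      set A := RCLike.re (inner 𝕂 x (P1 (σ (P1 x))) : 𝕂) with hAdef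
      set B := RCLike.re (inner 𝕂 x (P1 (σ (P1 w))) : 𝕂) with hBdef
      have hA : 0 ≤ A := hpos11' x
      have hsymB : RCLike.re (inner 𝕂 w (P1 (σ (P1 x))) : 𝕂) = B := by
        rw [inner_re_symm, hS11p]
      have hq : ∀ t : ℝ, 0 ≤ t ^ 2 * A + 2 * t * B := by
        intro t
        have hplus := hpos11' (w + (t : 𝕂) • x)
        have hexp : (inner 𝕂 (w + (t : 𝕂) • x) (P1 (σ (P1 (w + (t : 𝕂) • x)))) : 𝕂)
            = inner 𝕂 w (P1 (σ (P1 w))) + (t : 𝕂) * inner 𝕂 w (P1 (σ (P1 x)))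
              + (t : 𝕂) * inner 𝕂 x (P1 (σ (P1 w)))
              + ((t * t : ℝ) : 𝕂) * inner 𝕂 x (P1 (σ (P1 x))) := by
          simp only [map_add, map_smul, inner_add_left, inner_add_right, inner_smul_left,
            inner_smul_right, RCLike.conj_ofReal, RCLike.ofReal_mul]
          ring
        rw [hexp] at hplus
        simp only [map_add, RCLike.re_ofReal_mul] at hplus
        rw [h0] at hplus
        rw [hsymB] at hplus
        rw [← hBdef, ← hAdef] at hplus
        nlinarith [hplus]
      have hA1 : (0:ℝ) < A + 1 := by linarith
      have h := hq (-(B / (A + 1)))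
      have hd : B / (A + 1) * (A + 1) = B := div_mul_cancel₀ B hA1.ne'
      have hdb : B / (A + 1) * B = (B / (A + 1)) ^ 2 * (A + 1) := by
        have h2 : (B / (A + 1)) ^ 2 * (A + 1) = B / (A + 1) * (B / (A + 1) * (A + 1)) := by ring
        rw [h2, hd]
      have hsq : (B / (A + 1)) ^ 2 ≤ 0 := by
        nlinarith [h, hdb, mul_nonneg hA (sq_nonneg (B / (A + 1)))]
      have hdz : B / (A + 1) = 0 := by
        have := sq_nonneg (B / (A + 1))
        have : (B / (A + 1)) ^ 2 = 0 := le_antisymm hsq this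
        exact pow_eq_zero_iff (two_ne_zero) |>.mp this
      rw [← hd, hdz, zero_mul]
    have hSw : P1 (σ (P1 w)) = 0 := by
      have h1 := hB (P1 (σ (P1 w)))
      rw [inner_self_eq_norm_sq (𝕜 := 𝕂)] at h1
      exact norm_eq_zero.mp (pow_eq_zero_iff two_ne_zero |>.mp h1)
    have : ρ (P1 (σ (P1 w))) = P1 w := hρlp w
    rw [hSw, map_zero] at this
    rw [← hw, ← this]
  refine ⟨hAdj, ?_, ?_⟩
  · intro E₀ hE₀
    have hu : (P1 ∘L (σ ∘L P0)) E₀ = P1 (σ E₀) := by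
      simp only [ContinuousLinearMap.comp_apply, hE₀]
    have hEhat : P1 (-(ρ (P1 (σ E₀)))) = -(ρ (P1 (σ E₀))) := by
      rw [map_neg, hρP1l]
    have hval : RCLike.re (inner 𝕂 E₀ (schurCLM P0 P1 σ ρ E₀) : 𝕂)
        = RCLike.re (inner 𝕂 (E₀ + -(ρ (P1 (σ E₀)))) (σ (E₀ + -(ρ (P1 (σ E₀))))) : 𝕂) := by
      rw [keyRe E₀ _ hE₀ hEhat]
      simp
    refine ⟨⟨⟨-(ρ (P1 (σ E₀))), hEhat, hval⟩, ?_⟩, ?_⟩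
    · rintro r ⟨E, hE, rfl⟩
      rw [keyRe E₀ E hE₀ hE]
      have := hpos11 (E + ρ (P1 (σ E₀)))
      linarith
    · intro E hE
      constructor
      · intro heq
        rw [keyRe E₀ E hE₀ hE] at heq
        have hQ0 : RCLike.re (inner 𝕂 (E + ρ (P1 (σ E₀)))
            ((P1 ∘L (σ ∘L P1)) (E + ρ (P1 (σ E₀)))) : 𝕂) = 0 := by linarith
        have hw : P1 (E + ρ (P1 (σ E₀))) = E + ρ (P1 (σ E₀)) := by
          rw [map_add, hE, hρP1l]
        have hQ0' : RCLike.re (inner 𝕂 (E + ρ (P1 (σ E₀)))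
            (P1 (σ (P1 (E + ρ (P1 (σ E₀)))))) : 𝕂) = 0 := by
          simpa using hQ0
        have hw0 := hzero _ hw hQ0'
        rw [hu]
        exact eq_neg_of_add_eq_zero_left hw0
      · intro hEeq
        rw [hEeq, hu]
        rw [keyRe E₀ _ hE₀ (by rw [map_neg, hρP1l])]
        simp
  · intro z
    have hform : ((P0 ∘L (σ ∘L P0)) - schurCLM P0 P1 σ ρ) z
        = P0 (σ (P1 (ρ (P1 (σ (P0 z)))))) := by
      simp [schurCLM, ContinuousLinearMap.sub_apply, ContinuousLinearMap.comp_apply]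
    rw [hform]
    have hiter : (inner 𝕂 z (P0 (σ (P1 (ρ (P1 (σ (P0 z))))))) : 𝕂)
        = inner 𝕂 (ρ (P1 (σ (P0 z)))) (P1 (σ (P1 (ρ (P1 (σ (P0 z))))))) := by
      calc (inner 𝕂 z (P0 (σ (P1 (ρ (P1 (σ (P0 z))))))) : 𝕂)
          = inner 𝕂 (P0 z) (σ (P1 (ρ (P1 (σ (P0 z)))))) := by rw [hP0p]
        _ = inner 𝕂 (σ (P0 z)) (P1 (ρ (P1 (σ (P0 z))))) := (hσp _ _).symm
        _ = inner 𝕂 (σ (P0 z)) (ρ (P1 (σ (P0 z)))) := by rw [hρP1l]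
        _ = inner 𝕂 (σ (P0 z)) (P1 (ρ (P1 (σ (P0 z))))) := by rw [hρP1l]
        _ = inner 𝕂 (P1 (σ (P0 z))) (ρ (P1 (σ (P0 z)))) := by rw [hP1p, hρP1l]
        _ = inner 𝕂 (P1 (σ (P1 (ρ (P1 (σ (P0 z))))))) (ρ (P1 (σ (P0 z)))) := by
              rw [hρrp, hP1i]
        _ = inner 𝕂 (ρ (P1 (σ (P0 z)))) (P1 (σ (P1 (ρ (P1 (σ (P0 z))))))) := hS11p _ _
    rw [hiter]
    exact hpos11' _
end

section
/- Let (H, 𝒰, ℰ, 𝒥, σ) be a Z-problem and suppose σ is boundedly invertible, σ₁₁ : ℰ → ℰ is boundedly invertible, and (σ⁻¹)₂₂ = Γ₂σ⁻¹Γ₂ restricted to 𝒥 is boundedly invertible. Then the Schur complement σ₀₀ − σ₀₁σ₁₁⁻¹σ₁₀ (a bounded operator on 𝒰) is boundedly invertible and its inverse equals the dual Schur complement (σ⁻¹)₀₀ − (σ⁻¹)₀₂((σ⁻¹)₂₂)⁻¹(σ⁻¹)₂₀, where (σ⁻¹)ᵢⱼ = Γᵢσ⁻¹Γⱼ : Hⱼ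 → Hᵢ. -/
set_option maxHeartbeats 2000000 in
/-- Auxiliary purely algebraic form of the Schur complement duality, in an arbitrary
(noncommutative) ring. -/
lemma schur_aux {R : Type*} [Ring R] (p0 p1 p2 s t ρ μ : R)
    (h00 : p0*p0 = p0) (h11 : p1*p1 = p1) (h22 : p2*p2 = p2)
    (h01 : p0*p1 = 0) (h20 : p2*p0 = 0) (h21 : p2*p1 = 0)
    (hsum : p0 + p1 + p2 = 1)
    (hts : t*s = 1)
    (hρr : (p1*(s*p1))*ρ = p1)
    (hμl : μ*(p2*(t*p2)) = p2) :
    (p0*(t*p0) - (p0*(t*p2))*(μ*(p2*(t*p0)))) *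
      ((p0*(s*p0)) - (p0*(s*p1))*(ρ*(p1*(s*p0)))) = p0 := by
  have r : ∀ a b : R, a*t*p0*s*b + a*t*p1*s*b + a*t*p2*s*b = a*b := by
    intro a b
    have h : a*t*(p0+p1+p2)*s*b = a*b := by
      rw [hsum, mul_one, mul_assoc a t s, hts, mul_one]
    calc a*t*p0*s*b + a*t*p1*s*b + a*t*p2*s*b = a*t*(p0+p1+p2)*s*b := by noncomm_ring
      _ = a*b := h
  have r1 : p0*t*p0*s*p0 + p0*t*p1*s*p0 + p0*t*p2*s*p0 = p0 := by
    have := r p0 p0; rwa [h00] at this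
  have r2 : p0*t*p0*s*p1 + p0*t*p1*s*p1 + p0*t*p2*s*p1 = 0 := by
    have := r p0 p1; rwa [h01] at this
  have r3 : p2*t*p0*s*p0 + p2*t*p1*s*p0 + p2*t*p2*s*p0 = 0 := by
    have := r p2 p0; rwa [h20] at this
  have r4 : p2*t*p0*s*p1 + p2*t*p1*s*p1 + p2*t*p2*s*p1 = 0 := by
    have := r p2 p1; rwa [h21] at this
  linear_combination (norm := noncomm_ring) r1
    - r2 * (ρ*p1*s*p0)
    - (p0*t*p2*μ) * r3
    + (p0*t*p2*μ) * r4 * (ρ*p1*s*p0)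
    + (p0*t) * hρr * (p1*s*p0)
    + (p0*t) * h11 * (s*p0)
    + (p0*t*p2) * hμl * (s*p0)
    + (p0*t) * h22 * (s*p0)
    - (p0*t*p2*μ*p2*t) * hρr * (p1*s*p0)
    - (p0*t*p2*μ*p2*t) * h11 * (s*p0)
    - (p0*t*p2) * hμl * (s*p1*ρ*p1*s*p0)
    - (p0*t) * h22 * (s*p1*ρ*p1*s*p0)
    + (p0*t) * h00 * (s*p0)
    - (p0*t) * h00 * (s*p1*ρ*p1*s*p0)
    - (p0*t*p2*μ*p2*t) * h00 * (s*p0)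
    + (p0*t*p2*μ*p2*t) * h00 * (s*p1*ρ*p1*s*p0)

/-- For a Z-problem `(H, 𝒰, ℰ, 𝒥, σ)` (encoded by mutually orthogonal
projections `P0, P1, P2` with sum `1` and ranges `𝒰, ℰ, 𝒥`): if `σ` is boundedly
invertible with inverse `τ = σ⁻¹`, the block `σ₁₁` is boundedly invertible with inverse
`ρ` on `ℰ`, and the block `(σ⁻¹)₂₂ = Γ₂σ⁻¹Γ₂|𝒥` is boundedly invertible with inverse `μ`
on `𝒥`, then the Schur complement `σ₀₀ - σ₀₁σ₁₁⁻¹σ₁₀` (as an operator on `𝒰`) is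
boundedly invertible with inverse the dual Schur complement
`(σ⁻¹)₀₀ - (σ⁻¹)₀₂((σ⁻¹)₂₂)⁻¹(σ⁻¹)₂₀`. -/
theorem stmt_4
    {𝕂 : Type*} [RCLike 𝕂]
    {H : Type*} [NormedAddCommGroup H] [InnerProductSpace 𝕂 H] [CompleteSpace H]
    (P0 P1 P2 : H →L[𝕂] H)
    (hP0 : P0 ∘L P0 = P0) (hP0sa : ContinuousLinearMap.adjoint P0 = P0)
    (hP1 : P1 ∘L P1 = P1) (hP1sa : ContinuousLinearMap.adjoint P1 = P1)
    (hP2 : P2 ∘L P2 = P2) (hP2sa : ContinuousLinearMap.adjoint P2 = P2)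
    (h01 : P0 ∘L P1 = 0) (h02 : P0 ∘L P2 = 0) (h12 : P1 ∘L P2 = 0)
    (hsum : P0 + P1 + P2 = 1)
    (σ τ : H →L[𝕂] H) (hτl : τ ∘L σ = 1) (hτr : σ ∘L τ = 1)
    (ρ : H →L[𝕂] H)
    (hρ : P1 ∘L (ρ ∘L P1) = ρ)
    (hρl : ρ ∘L (P1 ∘L (σ ∘L P1)) = P1)
    (hρr : (P1 ∘L (σ ∘L P1)) ∘L ρ = P1)
    (μ : H →L[𝕂] H)
    (hμ : P2 ∘L (μ ∘L P2) = μ)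
    (hμl : μ ∘L (P2 ∘L (τ ∘L P2)) = P2)
    (hμr : (P2 ∘L (τ ∘L P2)) ∘L μ = P2) :
    ((P0 ∘L (τ ∘L P0)) - (P0 ∘L (τ ∘L P2)) ∘L (μ ∘L (P2 ∘L (τ ∘L P0)))) ∘L
        schurCLM P0 P1 σ ρ = P0 ∧
    schurCLM P0 P1 σ ρ ∘L
        ((P0 ∘L (τ ∘L P0)) - (P0 ∘L (τ ∘L P2)) ∘L (μ ∘L (P2 ∘L (τ ∘L P0)))) = P0 := by
  have h10 : P1 ∘L P0 = 0 := by
    have := congrArg (ContinuousLinearMap.adjoint) h01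
    simpa [ContinuousLinearMap.adjoint_comp, hP0sa, hP1sa] using this
  have h20 : P2 ∘L P0 = 0 := by
    have := congrArg (ContinuousLinearMap.adjoint) h02
    simpa [ContinuousLinearMap.adjoint_comp, hP0sa, hP2sa] using this
  have h21 : P2 ∘L P1 = 0 := by
    have := congrArg (ContinuousLinearMap.adjoint) h12
    simpa [ContinuousLinearMap.adjoint_comp, hP1sa, hP2sa] using this
  have hsum' : P0 + P2 + P1 = 1 := by rw [← hsum]; abel
  unfold schurCLM
  constructor
  · exact schur_aux P0 P1 P2 σ τ ρ μ hP0 hP1 hP2 h01 h20 h21 hsum hτl hρr hμl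
  · exact schur_aux P0 P2 P1 τ σ μ ρ hP0 hP2 hP1 h02 h10 h12 hsum' hτr hμr hρl
end

section
/- Let H = H₀ ⊕ H₁ be an orthogonal decomposition of a finite-dimensional inner product space, and suppose X is a linear operator on H of the form X = [[I, Y*],[0, I]] · [[W, 0],[0, Z]] · [[I, 0],[Y, I]] (block form with respect to H₀ ⊕ H₁) where W : H₀ → H₀ and Z : H₁ → H₁ are self-adjoint and Y : H₀ → H₁ is linear. Then for each u ∈ H₀, the set of pairs (w, v) ∈ H₀ × H₁ satisfying X(u + v) = w is exactly { (Wu, −Z⁺ZYu + v₁) : v₁ ∈ ker Z }, where Z⁺ is the Moore–Penrose pseudoinverse of Z. -/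
/-- Solutions of the constrained linear equation `X(u+v) = w` for a
block-factorized operator: `H = H₀ ⊕ H₁` is an orthogonal decomposition of a
finite-dimensional inner product space (encoded by orthogonal projections `P0, P1` with
`P0 + P1 = 1`), `W : H₀ → H₀` and `Z : H₁ → H₁` are self-adjoint, `Y : H₀ → H₁` is linear
(all encoded as operators on `H` supported on the appropriate blocks), and
`X = [[I, Y*],[0, I]]·[[W, 0],[0, Z]]·[[I, 0],[Y, I]] = (1 + Y*) ∘ (W + Z) ∘ (1 + Y)`.
`Zp` is the Moore–Penrose pseudoinverse of `Z` (characterized by the four Penrose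
equations).  For each `u ∈ H₀` the set of pairs `(w, v) ∈ H₀ × H₁` with `X(u+v) = w` is
exactly `{(Wu, -Z⁺ZYu + v₁) : v₁ ∈ ker Z}`. -/
theorem stmt_6
    {𝕂 : Type*} [RCLike 𝕂]
    {H : Type*} [NormedAddCommGroup H] [InnerProductSpace 𝕂 H] [FiniteDimensional 𝕂 H]
    (P0 P1 : H →ₗ[𝕂] H)
    (hP0 : P0 ∘ₗ P0 = P0) (hP0sa : LinearMap.adjoint P0 = P0)
    (hP1 : P1 ∘ₗ P1 = P1) (hP1sa : LinearMap.adjoint P1 = P1)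
    (hsum : P0 + P1 = 1)
    (W Z Y X : H →ₗ[𝕂] H)
    (hW : P0 ∘ₗ (W ∘ₗ P0) = W) (hWsa : LinearMap.adjoint W = W)
    (hZ : P1 ∘ₗ (Z ∘ₗ P1) = Z) (hZsa : LinearMap.adjoint Z = Z)
    (hY : P1 ∘ₗ (Y ∘ₗ P0) = Y)
    (hX : X = (1 + LinearMap.adjoint Y) ∘ₗ ((W + Z) ∘ₗ (1 + Y)))
    (Zp : H →ₗ[𝕂] H)
    (hZp1 : Zp ∘ₗ (Z ∘ₗ Zp) = Zp) (hZp2 : Z ∘ₗ (Zp ∘ₗ Z) = Z)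
    (hZp3 : LinearMap.adjoint (Zp ∘ₗ Z) = Zp ∘ₗ Z)
    (hZp4 : LinearMap.adjoint (Z ∘ₗ Zp) = Z ∘ₗ Zp) :
    ∀ u : H, P0 u = u →
      ∀ w v : H,
        (P0 w = w ∧ P1 v = v ∧ X (u + v) = w) ↔
          (w = W u ∧ ∃ v₁ : H, P1 v₁ = v₁ ∧ Z v₁ = 0 ∧ v = -(Zp (Z (Y u))) + v₁) := by
  have hP0i : ∀ x, P0 (P0 x) = P0 x := fun x => DFunLike.congr_fun hP0 x
  have hP1i : ∀ x, P1 (P1 x) = P1 x := fun x => DFunLike.congr_fun hP1 x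
  have hP1e : P1 = 1 - P0 := eq_sub_of_add_eq' hsum
  have h01i : ∀ x, P0 (P1 x) = 0 := by
    intro x; rw [hP1e]; simp [map_sub, hP0i x]
  have h10i : ∀ x, P1 (P0 x) = 0 := by
    intro x; rw [hP1e]; simp [hP0i x]
  -- support identities, pointwise
  have hP1Zi : ∀ x, P1 (Z x) = Z x := by
    intro x; rw [← hZ]; simp [LinearMap.comp_apply, hP1i]
  have hZP1i : ∀ x, Z (P1 x) = Z x := by
    intro x; conv_lhs => rw [← hZ]
    conv_rhs => rw [← hZ]
    simp [LinearMap.comp_apply, hP1i]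
  have hP0Wi : ∀ x, P0 (W x) = W x := by
    intro x; rw [← hW]; simp [LinearMap.comp_apply, hP0i]
  have hWP0i : ∀ x, W (P0 x) = W x := by
    intro x; conv_lhs => rw [← hW]
    conv_rhs => rw [← hW]
    simp [LinearMap.comp_apply, hP0i]
  have hP1Yi : ∀ x, P1 (Y x) = Y x := by
    intro x; rw [← hY]; simp [LinearMap.comp_apply, hP1i]
  have hYP0i : ∀ x, Y (P0 x) = Y x := by
    intro x; conv_lhs => rw [← hY]
    conv_rhs => rw [← hY]
    simp [LinearMap.comp_apply, hP0i]
  -- vanishing identities, pointwise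
  have hWP1i : ∀ x, W (P1 x) = 0 := by
    intro x; rw [← hWP0i (P1 x), h01i x, map_zero]
  have hP1Wi : ∀ x, P1 (W x) = 0 := by
    intro x; rw [← hP0Wi x, h10i (W x)]
  have hZP0i : ∀ x, Z (P0 x) = 0 := by
    intro x; rw [← hZP1i (P0 x), h10i x, map_zero]
  have hYP1i : ∀ x, Y (P1 x) = 0 := by
    intro x; rw [← hYP0i (P1 x), h01i x, map_zero]
  -- adjoint of Y is supported appropriately
  have hYs : LinearMap.adjoint Y = P0 ∘ₗ (LinearMap.adjoint Y ∘ₗ P1) := by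
    conv_lhs => rw [← hY]
    simp only [LinearMap.adjoint_comp, hP0sa, hP1sa, LinearMap.comp_assoc]
  have hYsP1i : ∀ x, LinearMap.adjoint Y (P1 x) = LinearMap.adjoint Y x := by
    intro x; rw [hYs]; simp [LinearMap.comp_apply, hP1i]
  have hP1Ysi : ∀ x, P1 (LinearMap.adjoint Y x) = 0 := by
    intro x; rw [hYs]; simp [LinearMap.comp_apply, h10i]
  -- P1 ∘ (Zp ∘ Z) = Zp ∘ Z
  have hZpZsa : Zp ∘ₗ Z = Z ∘ₗ LinearMap.adjoint Zp := by
    conv_lhs => rw [← hZp3]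
    rw [LinearMap.adjoint_comp, hZsa]
  have hP1ZpZi : ∀ x, P1 (Zp (Z x)) = Zp (Z x) := by
    intro x
    have h1 := DFunLike.congr_fun hZpZsa x
    simp only [LinearMap.comp_apply] at h1
    rw [h1, hP1Zi, ← h1]
  have hZZpZi : ∀ x, Z (Zp (Z x)) = Z x := by
    intro x
    have := DFunLike.congr_fun hZp2 x
    simpa [LinearMap.comp_apply] using this
  intro u hu w v
  have hP1u : P1 u = 0 := by rw [← hu, h10i]
  have hZu : Z u = 0 := by rw [← hu, hZP0i]
  have key : ∀ v' : H, P1 v' = v' →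
      X (u + v') = W u + (Z v' + Z (Y u)) +
        LinearMap.adjoint Y (Z v' + Z (Y u)) := by
    intro v' hv'
    have hYv' : Y v' = 0 := by rw [← hv', hYP1i]
    have hWv' : W v' = 0 := by rw [← hv', hWP1i]
    have hWYu : W (Y u) = 0 := by rw [← hP1Yi u, hWP1i]
    have hYsWu : LinearMap.adjoint Y (W u) = 0 := by
      rw [← hYsP1i (W u), hP1Wi, map_zero]
    simp only [hX, LinearMap.comp_apply, LinearMap.add_apply, Module.End.one_apply,
      map_add, hYv', hWv', hWYu, hZu, hYsWu, map_zero]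
    abel
  constructor
  · rintro ⟨hw, hv, hXe⟩
    have hXc := key v hv
    rw [hXe] at hXc
    have hP1w : P1 w = 0 := by rw [← hw, h10i]
    have hzero : Z v + Z (Y u) = 0 := by
      have h2 := congrArg P1 hXc
      simp only [map_add, hP1w, hP1Wi, hP1Zi, hP1Ysi, zero_add, add_zero] at h2
      exact h2.symm
    have hwW : w = W u := by rw [hXc, hzero]; simp
    refine ⟨hwW, v + Zp (Z (Y u)), ?_, ?_, by abel⟩
    · rw [map_add, hv, hP1ZpZi]
    · rw [map_add, hZZpZi, hzero]
  · rintro ⟨hw, v₁, hv₁P, hv₁Z, hve⟩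
    have hvP1 : P1 v = v := by
      rw [hve, map_add, map_neg, hP1ZpZi, hv₁P]
    have hZv : Z v = -(Z (Y u)) := by
      rw [hve, map_add, map_neg, hZZpZi, hv₁Z, add_zero]
    have hXc := key v hvP1
    rw [hZv] at hXc
    simp only [neg_add_cancel, map_zero, add_zero] at hXc
    exact ⟨by rw [hw, hP0Wi], hvP1, by rw [hXc, hw]⟩
end

section
/- Let H = H₀ ⊕ H₁ be an orthogonal decomposition of a finite-dimensional inner product space, and suppose X is a linear operator on H of the form X = [[I, Y*],[0, I]] · [[W, 0],[0, Z]] · [[I, 0],[Y, I]] with W : H₀ → H₀ and Z : H₁ → H₁ self-adjoint and Y : H₀ → H₁ linear, and assume Z ≥ 0. Then for every u ∈ H₀, ⟨u, Wu⟩ equals the minimum over v ∈ H₁ of ⟨u + v, X(u + v)⟩ (these inner products are real), and the set of minimizers is exactly { −Z⁺ZYu + v₁ : v₁ ∈ ker Z }, where Z⁺ is the Moore–Penrose pseudoinverse of Z. -/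
lemma aux_pos_zero
    {𝕂 : Type*} [RCLike 𝕂]
    {H : Type*} [NormedAddCommGroup H] [InnerProductSpace 𝕂 H] [FiniteDimensional 𝕂 H]
    (Z : H →ₗ[𝕂] H) (hZsa : LinearMap.adjoint Z = Z)
    (hZpos : ∀ x : H, 0 ≤ RCLike.re (inner 𝕂 x (Z x) : 𝕂))
    (w : H) (h : RCLike.re (inner 𝕂 w (Z w) : 𝕂) = 0) : Z w = 0 := by
  by_contra h0
  set b : ℝ := ‖Z w‖ ^ 2 with hb
  have hbpos : 0 < b := pow_pos (norm_pos_iff.mpr h0) 2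
  set c : ℝ := RCLike.re (inner 𝕂 (Z w) (Z (Z w)) : 𝕂) with hc
  have hc0 : 0 ≤ c := hZpos (Z w)
  have key : ∀ t : ℝ, 0 ≤ 2 * t * b + t ^ 2 * c := by
    intro t
    have ht := hZpos (w + (t : 𝕂) • Z w)
    have hwz : (inner 𝕂 w (Z (Z w)) : 𝕂) = inner 𝕂 (Z w) (Z w) := by
      rw [← LinearMap.adjoint_inner_left, hZsa]
    simp only [map_add, map_smul, inner_add_left, inner_add_right, inner_smul_left,
      inner_smul_right, RCLike.conj_ofReal, hwz] at ht
    simp only [map_add, RCLike.mul_re, RCLike.ofReal_re, RCLike.ofReal_im, h,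
      inner_self_eq_norm_sq, inner_self_im, ← hb, ← hc] at ht
    nlinarith [ht]
  have hd : (0:ℝ) < c + 1 := by linarith
  have h2 := key (-(b / (c + 1)))
  have h3 : (c+1)^2 * (2 * (-(b / (c + 1))) * b + (-(b / (c + 1)))^2 * c)
      = b^2 * (c - 2*(c+1)) := by field_simp; ring
  nlinarith [mul_pos hbpos hbpos, mul_nonneg (sq_nonneg (c+1)) h2]


/-- Fundamental minimization principle: with the setting of the
block-factorized operator `X = (1 + Y*) ∘ (W + Z) ∘ (1 + Y)` on a finite-dimensional
inner product space `H = H₀ ⊕ H₁` (projections `P0, P1`), `W, Z` self-adjoint, `Z ≥ 0`,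
and `Zp` the Moore–Penrose pseudoinverse of `Z`: for every `u ∈ H₀` the real quantity
`⟨u, Wu⟩` is the minimum of `⟨u+v, X(u+v)⟩` over `v ∈ H₁`, and the set of minimizers is
exactly `{-Z⁺ZYu + v₁ : v₁ ∈ ker Z}`. -/
theorem stmt_7
    {𝕂 : Type*} [RCLike 𝕂]
    {H : Type*} [NormedAddCommGroup H] [InnerProductSpace 𝕂 H] [FiniteDimensional 𝕂 H]
    (P0 P1 : H →ₗ[𝕂] H)
    (hP0 : P0 ∘ₗ P0 = P0) (hP0sa : LinearMap.adjoint P0 = P0)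
    (hP1 : P1 ∘ₗ P1 = P1) (hP1sa : LinearMap.adjoint P1 = P1)
    (hsum : P0 + P1 = 1)
    (W Z Y X : H →ₗ[𝕂] H)
    (hW : P0 ∘ₗ (W ∘ₗ P0) = W) (hWsa : LinearMap.adjoint W = W)
    (hZ : P1 ∘ₗ (Z ∘ₗ P1) = Z) (hZsa : LinearMap.adjoint Z = Z)
    (hZpos : ∀ x : H, 0 ≤ RCLike.re (inner 𝕂 x (Z x) : 𝕂))
    (hY : P1 ∘ₗ (Y ∘ₗ P0) = Y)
    (hX : X = (1 + LinearMap.adjoint Y) ∘ₗ ((W + Z) ∘ₗ (1 + Y)))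
    (Zp : H →ₗ[𝕂] H)
    (hZp1 : Zp ∘ₗ (Z ∘ₗ Zp) = Zp) (hZp2 : Z ∘ₗ (Zp ∘ₗ Z) = Z)
    (hZp3 : LinearMap.adjoint (Zp ∘ₗ Z) = Zp ∘ₗ Z)
    (hZp4 : LinearMap.adjoint (Z ∘ₗ Zp) = Z ∘ₗ Zp) :
    ∀ u : H, P0 u = u →
      IsLeast {r : ℝ | ∃ v : H, P1 v = v ∧ r = RCLike.re (inner 𝕂 (u + v) (X (u + v)) : 𝕂)}
        (RCLike.re (inner 𝕂 u (W u) : 𝕂)) ∧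
      (∀ v : H, P1 v = v →
        (RCLike.re (inner 𝕂 (u + v) (X (u + v)) : 𝕂) = RCLike.re (inner 𝕂 u (W u) : 𝕂) ↔
          ∃ v₁ : H, P1 v₁ = v₁ ∧ Z v₁ = 0 ∧ v = -(Zp (Z (Y u))) + v₁)) := by
  -- pointwise versions of structural facts
  have hsum' : ∀ x : H, P0 x + P1 x = x := fun x => by
    have := DFunLike.congr_fun hsum x; simpa using this
  have hP10 : ∀ x : H, P1 x = x → P0 x = 0 := fun x hx => by
    have := hsum' x; rw [hx] at this; linear_combination (norm := abel) this
  have hP01 : ∀ x : H, P0 x = x → P1 x = 0 := fun x hx => by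
    have := hsum' x; rw [hx] at this; linear_combination (norm := abel) this
  have hP1P1 : ∀ x : H, P1 (P1 x) = P1 x := fun x => by
    have := DFunLike.congr_fun hP1 x; simpa using this
  have hYpt : ∀ x : H, P1 (Y (P0 x)) = Y x := fun x => by
    have := DFunLike.congr_fun hY x; simpa using this
  have hZpt : ∀ x : H, P1 (Z (P1 x)) = Z x := fun x => by
    have := DFunLike.congr_fun hZ x; simpa using this
  have hWpt : ∀ x : H, P0 (W (P0 x)) = W x := fun x => by
    have := DFunLike.congr_fun hW x; simpa using this
  have hYu1 : ∀ x : H, P1 (Y x) = Y x := fun x => by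
    rw [← hYpt x, hP1P1, hYpt]
  have hYv0 : ∀ v : H, P1 v = v → Y v = 0 := fun v hv => by
    rw [← hYpt v, hP10 v hv]; simp
  have hZu0 : ∀ x : H, P0 x = x → Z x = 0 := fun x hx => by
    rw [← hZpt x, hP01 x hx]; simp
  have hWw0 : ∀ x : H, P1 x = x → W x = 0 := fun x hx => by
    rw [← hWpt x, hP10 x hx]; simp
  have hZ1 : ∀ x : H, P1 (Z x) = Z x := fun x => by
    rw [← hZpt x, hP1P1, hZpt]
  have hW0 : ∀ x : H, P0 (W x) = W x := fun x => by
    have := DFunLike.congr_fun hP0 (W (P0 x))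
    rw [← hWpt x]; simpa using this
  -- orthogonality of inner products
  have hinnW : ∀ x z : H, P1 x = x → (inner 𝕂 x (W z) : 𝕂) = 0 := fun x z hx => by
    rw [← hW0 z, ← LinearMap.adjoint_inner_left, hP0sa, hP10 x hx, inner_zero_left]
  have hinnZ : ∀ x z : H, P0 x = x → (inner 𝕂 x (Z z) : 𝕂) = 0 := fun x z hx => by
    rw [← hZ1 z, ← LinearMap.adjoint_inner_left, hP1sa, hP01 x hx, inner_zero_left]
  intro u hu
  -- the key identity
  have main : ∀ v : H, P1 v = v →
      (inner 𝕂 (u + v) (X (u + v)) : 𝕂)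
        = inner 𝕂 u (W u) + inner 𝕂 (v + Y u) (Z (v + Y u)) := by
    intro v hv
    have h1 : (1 + Y) (u + v) = u + (v + Y u) := by
      simp only [LinearMap.add_apply, Module.End.one_apply, map_add, hYv0 v hv, add_zero]
      abel
    have h2 : ∀ z : H, (inner 𝕂 (u + v) ((1 + LinearMap.adjoint Y) z) : 𝕂)
        = inner 𝕂 ((1 + Y) (u + v)) z := by
      intro z
      simp only [LinearMap.add_apply, Module.End.one_apply, inner_add_left, inner_add_right,
        LinearMap.adjoint_inner_right]
    rw [hX]
    simp only [LinearMap.comp_apply]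
    rw [h2, h1]
    set w := v + Y u with hwdef
    have hw1 : P1 w = w := by rw [hwdef, map_add, hv, hYu1]
    simp only [LinearMap.add_apply, map_add]
    rw [hWw0 w hw1, hZu0 u hu]
    simp only [add_zero, zero_add, inner_add_left, inner_add_right,
      hinnW w u hw1, hinnZ u w hu, add_zero, zero_add]
  have mainre : ∀ v : H, P1 v = v →
      RCLike.re (inner 𝕂 (u + v) (X (u + v)) : 𝕂)
        = RCLike.re (inner 𝕂 u (W u) : 𝕂) + RCLike.re (inner 𝕂 (v + Y u) (Z (v + Y u)) : 𝕂) := by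
    intro v hv; rw [main v hv, map_add]
  -- P1 fixes Zp ∘ Z range
  have hZP1 : ∀ x : H, Z (P1 x) = Z x := fun x => by
    conv_lhs => rw [← hZ]
    simp only [LinearMap.comp_apply]
    rw [hP1P1, hZpt]
  have hAP1 : (Zp ∘ₗ Z) ∘ₗ P1 = Zp ∘ₗ Z := by
    ext x
    simp only [LinearMap.comp_apply]
    rw [hZP1]
  have hP1A : P1 ∘ₗ (Zp ∘ₗ Z) = Zp ∘ₗ Z := by
    have h := congrArg LinearMap.adjoint hAP1
    rw [LinearMap.adjoint_comp, hZp3, hP1sa] at h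
    exact h
  have hP1Zp : P1 (Zp (Z (Y u))) = Zp (Z (Y u)) := by
    have := DFunLike.congr_fun hP1A (Y u); simpa using this
  have hZZpZ : ∀ x : H, Z (Zp (Z x)) = Z x := fun x => by
    have := DFunLike.congr_fun hZp2 x; simpa using this
  refine ⟨⟨⟨-(Y u), ?_, ?_⟩, ?_⟩, ?_⟩
  · rw [map_neg, hYu1]
  · rw [mainre _ (by rw [map_neg, hYu1])]
    simp
  · rintro r ⟨v, hv, rfl⟩
    rw [mainre v hv]
    have := hZpos (v + Y u)
    linarith
  · intro v hv
    rw [mainre v hv]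
    constructor
    · intro h
      have h0 : RCLike.re (inner 𝕂 (v + Y u) (Z (v + Y u)) : 𝕂) = 0 := by linarith
      have hz : Z (v + Y u) = 0 := aux_pos_zero Z hZsa hZpos _ h0
      refine ⟨v + Zp (Z (Y u)), ?_, ?_, by abel⟩
      · rw [map_add, hv, hP1Zp]
      · rw [map_add, hZZpZ]
        have : Z v + Z (Y u) = Z (v + Y u) := (map_add Z v (Y u)).symm
        rw [this, hz]
    · rintro ⟨v₁, hv₁, hZv₁, rfl⟩
      have hw : -(Zp (Z (Y u))) + v₁ + Y u = (Y u - Zp (Z (Y u))) + v₁ := by abel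
      rw [hw]
      have : Z ((Y u - Zp (Z (Y u))) + v₁) = 0 := by
        rw [map_add, map_sub, hZZpZ, hZv₁]; simp
      rw [this, inner_zero_right]
      simp
end

section
/- Let (H, 𝒰, ℰ, 𝒥, σ) be a Z-problem with dim H < ∞ and suppose the compression of σ to 𝒰 ⊕ ℰ is self-adjoint (i.e. σ₀₀* = σ₀₀, σ₁₁* = σ₁₁, σ₀₁* = σ₁₀). Then: (a) there exists some E₀ ∈ 𝒰 at which the Z-problem has exactly one solution if and only if ker σ₁₁ = {0}; and (b) there exists a function f : 𝒰 → 𝒰 such that J₀ = f(E₀) whenever E₀ ∈ 𝒰 and (J₀, E, J) is a solution of the Z-problem at E₀, if and only if ker σ₁₁ ⊆ ker σ₀₁. -/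
/-- Existence/uniqueness criteria for the Z-problem: the Z-problem
`(H, 𝒰, ℰ, 𝒥, σ)` on a finite-dimensional Hilbert space is encoded by mutually orthogonal
projections `P0, P1, P2` with sum `1` (ranges `𝒰, ℰ, 𝒥`), and the compression of `σ` to
`𝒰 ⊕ ℰ` is self-adjoint (`σ₀₀* = σ₀₀`, `σ₁₁* = σ₁₁`, `σ₀₁* = σ₁₀`).  Then:
(a) the Z-problem has exactly one solution at some `E₀ ∈ 𝒰` iff the block `σ₁₁` has
trivial kernel on `ℰ`; (b) there is a function `f` with `J₀ = f(E₀)` for every solution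
`(J₀, E, J)` at every `E₀ ∈ 𝒰` iff `ker σ₁₁ ⊆ ker σ₀₁`. -/
theorem stmt_11
    {𝕂 : Type*} [RCLike 𝕂]
    {H : Type*} [NormedAddCommGroup H] [InnerProductSpace 𝕂 H] [FiniteDimensional 𝕂 H]
    (P0 P1 P2 : H →ₗ[𝕂] H)
    (hP0 : P0 ∘ₗ P0 = P0) (hP0sa : LinearMap.adjoint P0 = P0)
    (hP1 : P1 ∘ₗ P1 = P1) (hP1sa : LinearMap.adjoint P1 = P1)
    (hP2 : P2 ∘ₗ P2 = P2) (hP2sa : LinearMap.adjoint P2 = P2)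
    (h01 : P0 ∘ₗ P1 = 0) (h02 : P0 ∘ₗ P2 = 0) (h12 : P1 ∘ₗ P2 = 0)
    (hsum : P0 + P1 + P2 = 1)
    (σ : H →ₗ[𝕂] H)
    (hσ00 : LinearMap.adjoint (P0 ∘ₗ (σ ∘ₗ P0)) = P0 ∘ₗ (σ ∘ₗ P0))
    (hσ11 : LinearMap.adjoint (P1 ∘ₗ (σ ∘ₗ P1)) = P1 ∘ₗ (σ ∘ₗ P1))
    (hσ01 : LinearMap.adjoint (P0 ∘ₗ (σ ∘ₗ P1)) = P1 ∘ₗ (σ ∘ₗ P0)) :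
    ((∃ E₀ : H, P0 E₀ = E₀ ∧
        ∃! t : H × H × H, P0 t.1 = t.1 ∧ P1 t.2.1 = t.2.1 ∧ P2 t.2.2 = t.2.2 ∧
          t.1 + t.2.2 = σ (E₀ + t.2.1)) ↔
      (∀ x : H, P1 x = x → (P1 ∘ₗ (σ ∘ₗ P1)) x = 0 → x = 0)) ∧
    ((∃ f : H → H, ∀ E₀ J₀ E J : H,
        P0 E₀ = E₀ → P0 J₀ = J₀ → P1 E = E → P2 J = J →
          J₀ + J = σ (E₀ + E) → J₀ = f E₀) ↔
      LinearMap.ker (P1 ∘ₗ (σ ∘ₗ P1)) ≤ LinearMap.ker (P0 ∘ₗ (σ ∘ₗ P1))) := by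
  classical
  have app : ∀ (A B : H →ₗ[𝕂] H), A ∘ₗ B = 0 → ∀ x : H, A (B x) = 0 := by
    intro A B h x
    have := LinearMap.ext_iff.mp h x
    simpa using this
  have hadj0 : LinearMap.adjoint (0 : H →ₗ[𝕂] H) = 0 := by simp
  have h10 : P1 ∘ₗ P0 = 0 := by
    have := congrArg LinearMap.adjoint h01
    rwa [LinearMap.adjoint_comp, hP0sa, hP1sa, hadj0] at this
  have h20 : P2 ∘ₗ P0 = 0 := by
    have := congrArg LinearMap.adjoint h02
    rwa [LinearMap.adjoint_comp, hP0sa, hP2sa, hadj0] at this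
  have hsum' : ∀ y : H, P0 y + P1 y + P2 y = y := by
    intro y
    have := LinearMap.ext_iff.mp hsum y
    simpa using this
  -- structure of solutions: the J₀, J components are determined, and P1 σ(E₀+E) = 0
  have key : ∀ E₀ J₀ E J : H, P0 E₀ = E₀ → P0 J₀ = J₀ → P1 E = E → P2 J = J →
      J₀ + J = σ (E₀ + E) →
      P1 (σ (E₀ + E)) = 0 ∧ J₀ = P0 (σ (E₀ + E)) ∧ J = P2 (σ (E₀ + E)) := by
    intro E₀ J₀ E J hE₀ hJ₀ hE hJ heq
    have e1 : P1 (σ (E₀ + E)) = 0 := by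
      have h' := congrArg P1 heq
      rw [map_add, ← hJ₀, ← hJ, app _ _ h10, app _ _ h12] at h'
      simpa using h'.symm
    have e0 : J₀ = P0 (σ (E₀ + E)) := by
      have h' := congrArg P0 heq
      rw [map_add, ← hJ, app _ _ h02] at h'
      rw [hJ₀] at h'
      simpa using h'
    have e2 : J = P2 (σ (E₀ + E)) := by
      have h' := congrArg P2 heq
      rw [map_add, ← hJ₀, app _ _ h20] at h'
      rw [hJ] at h'
      simpa using h'
    exact ⟨e1, e0, e2⟩
  -- converse construction of solutions
  have mk : ∀ E₀ E : H, P1 E = E → P1 (σ (E₀ + E)) = 0 →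
      (P0 (P0 (σ (E₀ + E))) = P0 (σ (E₀ + E)) ∧ P1 E = E ∧
        P2 (P2 (σ (E₀ + E))) = P2 (σ (E₀ + E)) ∧
        P0 (σ (E₀ + E)) + P2 (σ (E₀ + E)) = σ (E₀ + E)) := by
    intro E₀ E hE hk
    refine ⟨?_, hE, ?_, ?_⟩
    · have := LinearMap.ext_iff.mp hP0 (σ (E₀ + E)); simpa using this
    · have := LinearMap.ext_iff.mp hP2 (σ (E₀ + E)); simpa using this
    · have := hsum' (σ (E₀ + E))
      rw [hk] at this
      simpa using this
  constructor
  · -- part (a)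
    constructor
    · rintro ⟨E₀, hE₀, t, ⟨ht0, ht1, ht2, hteq⟩, huniq⟩ x hx hker
      have hker' : P1 (σ x) = 0 := by
        have h' : P1 (σ (P1 x)) = 0 := by simpa using hker
        rwa [hx] at h'
      set E' := t.2.1 + x with hE'
      have hE'1 : P1 E' = E' := by rw [hE', map_add, ht1, hx]
      have hk1 : P1 (σ (E₀ + t.2.1)) = 0 :=
        (key E₀ t.1 t.2.1 t.2.2 hE₀ ht0 ht1 ht2 hteq).1
      have hk : P1 (σ (E₀ + E')) = 0 := by
        have hre : (E₀ + E') = (E₀ + t.2.1) + x := by rw [hE']; abel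
        rw [hre, map_add, map_add, hk1, hker', add_zero]
      obtain ⟨m0, m1, m2, meq⟩ := mk E₀ E' hE'1 hk
      have heqt := huniq (P0 (σ (E₀ + E')), E', P2 (σ (E₀ + E'))) ⟨m0, m1, m2, meq⟩
      have h2 : E' = t.2.1 := congrArg (fun p : H × H × H => p.2.1) heqt
      have hfin : t.2.1 + x = t.2.1 := by rw [← hE', h2]
      simpa using hfin
    · intro hker
      refine ⟨0, map_zero _, ⟨(0, 0, 0), ⟨map_zero _, map_zero _, map_zero _, by simp⟩, ?_⟩⟩
      rintro ⟨J₀, E, J⟩ ⟨h0, h1, h2, heq⟩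
      obtain ⟨e1, e0, e2⟩ := key 0 J₀ E J (map_zero _) h0 h1 h2 heq
      have hE0 : E = 0 := by
        apply hker E h1
        have h' : P1 (σ (P1 E)) = 0 := by rw [h1]; simpa using e1
        simpa using h'
      have hJ₀0 : J₀ = 0 := by rw [e0, hE0]; simp
      have hJ0 : J = 0 := by rw [e2, hE0]; simp
      simp [hE0, hJ₀0, hJ0]
  · -- part (b)
    constructor
    · rintro ⟨f, hf⟩ x hx
      have hx' : P1 (σ (P1 x)) = 0 := by simpa using hx
      have hy1 : P1 (P1 x) = P1 x := by
        have := LinearMap.ext_iff.mp hP1 x; simpa using this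
      have hk : P1 (σ ((0:H) + P1 x)) = 0 := by rw [zero_add]; exact hx'
      obtain ⟨m0, m1, m2, meq⟩ := mk 0 (P1 x) hy1 hk
      have hf1 : P0 (σ ((0:H) + P1 x)) = f 0 :=
        hf 0 (P0 (σ ((0:H) + P1 x))) (P1 x) (P2 (σ ((0:H) + P1 x)))
          (map_zero _) m0 m1 m2 meq
      have hf0 : (0:H) = f 0 := by
        apply hf 0 0 0 0 (map_zero _) (map_zero _) (map_zero _) (map_zero _)
        simp
      have hres : P0 (σ (P1 x)) = 0 := by
        have := hf1.trans hf0.symm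
        rwa [zero_add] at this
      simpa using hres
    · intro hker
      have uniqJ : ∀ E₀ J₀ E J J₀' E' J' : H, P0 E₀ = E₀ →
          P0 J₀ = J₀ → P1 E = E → P2 J = J → J₀ + J = σ (E₀ + E) →
          P0 J₀' = J₀' → P1 E' = E' → P2 J' = J' → J₀' + J' = σ (E₀ + E') →
          J₀ = J₀' := by
        intro E₀ J₀ E J J₀' E' J' hE₀ h0 h1 h2 heq h0' h1' h2' heq'
        obtain ⟨e1, e0, _⟩ := key E₀ J₀ E J hE₀ h0 h1 h2 heq
        obtain ⟨e1', e0', _⟩ := key E₀ J₀' E' J' hE₀ h0' h1' h2' heq'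
        have hd1 : P1 (E - E') = E - E' := by rw [map_sub, h1, h1']
        have hσd : σ (E - E') = σ (E₀ + E) - σ (E₀ + E') := by
          rw [← map_sub]; congr 1; abel
        have hP1d : P1 (σ (E - E')) = 0 := by
          rw [hσd, map_sub, e1, e1', sub_zero]
        have hmem : (E - E') ∈ LinearMap.ker (P1 ∘ₗ (σ ∘ₗ P1)) := by
          simp only [LinearMap.mem_ker, LinearMap.comp_apply]
          rw [hd1, hP1d]
        have hmem' := hker hmem
        have hP0d : P0 (σ (E - E')) = 0 := by
          have := hmem'
          simp only [LinearMap.mem_ker, LinearMap.comp_apply] at this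
          rwa [hd1] at this
        rw [e0, e0']
        have hz : P0 (σ (E₀ + E)) - P0 (σ (E₀ + E')) = 0 := by
          rw [← map_sub, ← hσd, hP0d]
        exact sub_eq_zero.mp hz
      have fex : ∀ E₀ : H, ∃ z : H, ∀ J₀ E J : H,
          P0 E₀ = E₀ → P0 J₀ = J₀ → P1 E = E → P2 J = J →
          J₀ + J = σ (E₀ + E) → J₀ = z := by
        intro E₀
        by_cases h : ∃ J₀ E J : H, P0 E₀ = E₀ ∧ P0 J₀ = J₀ ∧ P1 E = E ∧ P2 J = J ∧
            J₀ + J = σ (E₀ + E)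
        · obtain ⟨J₀w, Ew, Jw, hEw0, hw0, hw1, hw2, hweq⟩ := h
          exact ⟨J₀w, fun J₀ E J hE₀ h0 h1 h2 heq =>
            uniqJ E₀ J₀ E J J₀w Ew Jw hE₀ h0 h1 h2 heq hw0 hw1 hw2 hweq⟩
        · exact ⟨0, fun J₀ E J hE₀ h0 h1 h2 heq =>
            absurd ⟨J₀, E, J, hE₀, h0, h1, h2, heq⟩ h⟩
      refine ⟨fun E₀ => (fex E₀).choose, fun E₀ J₀ E J hE₀ h0 h1 h2 heq =>
        (fex E₀).choose_spec J₀ E J hE₀ h0 h1 h2 heq⟩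
end

section
/- Let X and Y be self-adjoint linear operators on a finite-dimensional inner product space H with 0 ≤ X ≤ Y. Then Y⁺ ≤ X⁺ (where ⁺ denotes the Moore–Penrose pseudoinverse) if and only if ker Y = ker X. -/
open LinearMap RCLike

section Aux

variable {𝕂 : Type*} [RCLike 𝕂]
variable {H : Type*} [NormedAddCommGroup H] [InnerProductSpace 𝕂 H] [FiniteDimensional 𝕂 H]

local notation "⟪" x ", " y "⟫" => @inner 𝕂 _ _ x y

/-- A Moore–Penrose pseudoinverse of a self-adjoint operator is self-adjoint. -/
lemma pinv_sa_aux (A B : H →ₗ[𝕂] H) (hA : LinearMap.adjoint A = A)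
    (h1 : B ∘ₗ (A ∘ₗ B) = B) (h2 : A ∘ₗ (B ∘ₗ A) = A)
    (h3 : LinearMap.adjoint (B ∘ₗ A) = B ∘ₗ A)
    (h4 : LinearMap.adjoint (A ∘ₗ B) = A ∘ₗ B) :
    LinearMap.adjoint B = B := by
  set C := LinearMap.adjoint B with hC
  have h1p : ∀ z, B (A (B z)) = B z := fun z => LinearMap.ext_iff.mp h1 z
  have h2p : ∀ z, A (B (A z)) = A z := fun z => LinearMap.ext_iff.mp h2 z
  -- A ∘ C = B ∘ A
  have hAC : A ∘ₗ C = B ∘ₗ A := by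
    rw [← h3, LinearMap.adjoint_comp, hA]
  have hACp : ∀ z, A (C z) = B (A z) := fun z => LinearMap.ext_iff.mp hAC z
  -- C ∘ A = A ∘ B
  have hCA : C ∘ₗ A = A ∘ₗ B := by
    rw [← h4, LinearMap.adjoint_comp, hA]
  have hCAp : ∀ z, C (A z) = A (B z) := fun z => LinearMap.ext_iff.mp hCA z
  -- (B∘A)∘A = A  (adjoint of h2)
  have e1 : (B ∘ₗ A) ∘ₗ A = A := by
    have h := congrArg LinearMap.adjoint h2
    rwa [LinearMap.adjoint_comp, h3, hA] at h
  have e1p : ∀ z, B (A (A z)) = A z := fun z => LinearMap.ext_iff.mp e1 z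
  -- (A∘B)∘C = C  (adjoint of h1)
  have c1 : (A ∘ₗ B) ∘ₗ C = C := by
    have h := congrArg LinearMap.adjoint h1
    rwa [LinearMap.adjoint_comp, h4] at h
  have c1p : ∀ z, A (B (C z)) = C z := fun z => LinearMap.ext_iff.mp c1 z
  -- A ∘ C ∘ A = A
  have c2p : ∀ z, A (C (A z)) = A z := by
    intro z
    rw [hACp (A z), e1p]
  -- self-adjointness of A∘C, C∘A
  have sAC : LinearMap.adjoint (A ∘ₗ C) = A ∘ₗ C := by rw [hAC]; exact h3
  have sCA : LinearMap.adjoint (C ∘ₗ A) = C ∘ₗ A := by rw [hCA]; exact h4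
  -- A∘B = A∘C
  have f1 : (A ∘ₗ B) ∘ₗ (A ∘ₗ C) = A ∘ₗ C := by
    apply LinearMap.ext; intro z
    simp only [LinearMap.comp_apply]
    exact h2p (C z)
  have f2 : (A ∘ₗ C) ∘ₗ (A ∘ₗ B) = A ∘ₗ B := by
    apply LinearMap.ext; intro z
    simp only [LinearMap.comp_apply]
    exact c2p (B z)
  have hABAC : A ∘ₗ B = A ∘ₗ C := by
    have h := congrArg LinearMap.adjoint f2
    rw [LinearMap.adjoint_comp, h4, sAC, f1] at h
    exact h.symm
  have hABACp : ∀ z, A (B z) = A (C z) := fun z => LinearMap.ext_iff.mp hABAC z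
  -- A∘B = B∘A
  have hcomm : ∀ z, A (B z) = B (A z) := by
    intro z; rw [hABACp, hACp]
  -- conclude B = C
  have key : ∀ z, C z = B z := by
    intro z
    have : C z = B (B (A z)) := by
      rw [← c1p z, hcomm (C z), hACp z]
    rw [this, ← h1p z, hcomm z]
  exact LinearMap.ext fun z => key z

/-- If `A` is self-adjoint, positive semidefinite, and `re ⟪v, A v⟫ ≤ 0`, then `A v = 0`. -/
lemma pos_inner_zero_aux (A : H →ₗ[𝕂] H) (hA : LinearMap.adjoint A = A)
    (hpos : ∀ w : H, 0 ≤ re ⟪w, A w⟫) (v : H) (hv : re ⟪v, A v⟫ ≤ 0) :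
    A v = 0 := by
  set w := A v with hw
  set a : ℝ := re ⟪w, A w⟫ with ha
  set c : ℝ := re ⟪w, A v⟫ with hcdef
  have ha0 : 0 ≤ a := hpos w
  have hc0 : 0 ≤ c := by
    rw [hcdef, ← hw]
    have : (0:ℝ) ≤ re ⟪w, w⟫ := inner_self_nonneg
    exact this
  have hquad : ∀ t : ℝ, 0 ≤ 2 * t * c + t ^ 2 * a := by
    intro t
    have h := hpos (v + (t : 𝕂) • w)
    have hexp : ⟪v + (t : 𝕂) • w, A (v + (t : 𝕂) • w)⟫
        = ⟪v, A v⟫ + (t : 𝕂) * ⟪v, A w⟫ + (t : 𝕂) * ⟪w, A v⟫ + (t : 𝕂) * ((t : 𝕂) * ⟪w, A w⟫) := by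
      rw [map_add, map_smul, inner_add_left, inner_add_right, inner_add_right,
        inner_smul_left, inner_smul_right, inner_smul_left, inner_smul_right,
        RCLike.conj_ofReal]
      ring
    rw [hexp] at h
    simp only [map_add, RCLike.re_ofReal_mul] at h
    have hsym : re ⟪v, A w⟫ = re ⟪w, A v⟫ := by
      rw [← LinearMap.adjoint_inner_left A w v, hA, inner_re_symm]
    rw [hsym] at h
    have hva : re ⟪v, A v⟫ ≤ 0 := hv
    nlinarith [h]
  have hc : c = 0 := by
    by_cases haz : a = 0
    · have h := hquad (-c)
      rw [haz] at h
      nlinarith [h, hc0]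
    · have hagt : 0 < a := lt_of_le_of_ne ha0 (Ne.symm haz)
      have h := hquad (-(c / a))
      have h' : 0 ≤ (2 * (-(c / a)) * c + (-(c / a)) ^ 2 * a) * a :=
        mul_nonneg h (le_of_lt hagt)
      have heq : (2 * (-(c / a)) * c + (-(c / a)) ^ 2 * a) * a = -(c ^ 2) := by
        field_simp
        ring
      rw [heq] at h'
      nlinarith [h', hc0]
  have hre0 : re ⟪w, w⟫ ≤ 0 := by
    rw [hw] at hcdef ⊢
    rw [← hcdef, hc]
  exact re_inner_self_nonpos.mp hre0

end Aux


/-- Pseudoinverse order reversal: let `X`, `Y` be self-adjoint operators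
on a finite-dimensional inner product space `H` with `0 ≤ X ≤ Y` (in the sense of real
quadratic forms), and let `Xp = X⁺`, `Yp = Y⁺` be their Moore–Penrose pseudoinverses
(characterized by the four Penrose equations).  Then `Y⁺ ≤ X⁺` if and only if
`ker Y = ker X`. -/
theorem stmt_14
    {𝕂 : Type*} [RCLike 𝕂]
    {H : Type*} [NormedAddCommGroup H] [InnerProductSpace 𝕂 H] [FiniteDimensional 𝕂 H]
    (X Y : H →ₗ[𝕂] H)
    (hXsa : LinearMap.adjoint X = X) (hYsa : LinearMap.adjoint Y = Y)
    (hXpos : ∀ v : H, 0 ≤ RCLike.re (inner 𝕂 v (X v) : 𝕂))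
    (hXY : ∀ v : H, RCLike.re (inner 𝕂 v (X v) : 𝕂) ≤ RCLike.re (inner 𝕂 v (Y v) : 𝕂))
    (Xp : H →ₗ[𝕂] H)
    (hXp1 : Xp ∘ₗ (X ∘ₗ Xp) = Xp) (hXp2 : X ∘ₗ (Xp ∘ₗ X) = X)
    (hXp3 : LinearMap.adjoint (Xp ∘ₗ X) = Xp ∘ₗ X)
    (hXp4 : LinearMap.adjoint (X ∘ₗ Xp) = X ∘ₗ Xp)
    (Yp : H →ₗ[𝕂] H)
    (hYp1 : Yp ∘ₗ (Y ∘ₗ Yp) = Yp) (hYp2 : Y ∘ₗ (Yp ∘ₗ Y) = Y)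
    (hYp3 : LinearMap.adjoint (Yp ∘ₗ Y) = Yp ∘ₗ Y)
    (hYp4 : LinearMap.adjoint (Y ∘ₗ Yp) = Y ∘ₗ Yp) :
    (∀ v : H, RCLike.re (inner 𝕂 v (Yp v) : 𝕂) ≤ RCLike.re (inner 𝕂 v (Xp v) : 𝕂)) ↔
      LinearMap.ker Y = LinearMap.ker X := by
  have hXpsa : LinearMap.adjoint Xp = Xp := pinv_sa_aux X Xp hXsa hXp1 hXp2 hXp3 hXp4
  have hYpsa : LinearMap.adjoint Yp = Yp := pinv_sa_aux Y Yp hYsa hYp1 hYp2 hYp3 hYp4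
  -- pointwise Penrose equations
  have hXp1p : ∀ z, Xp (X (Xp z)) = Xp z := fun z => LinearMap.ext_iff.mp hXp1 z
  have hXp2p : ∀ z, X (Xp (X z)) = X z := fun z => LinearMap.ext_iff.mp hXp2 z
  have hYp1p : ∀ z, Yp (Y (Yp z)) = Yp z := fun z => LinearMap.ext_iff.mp hYp1 z
  have hYp2p : ∀ z, Y (Yp (Y z)) = Y z := fun z => LinearMap.ext_iff.mp hYp2 z
  -- commutation X∘Xp = Xp∘X
  have hcX : ∀ z, Xp (X z) = X (Xp z) := by
    have h := hXp4
    rw [LinearMap.adjoint_comp, hXpsa, hXsa] at h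
    exact fun z => LinearMap.ext_iff.mp h z
  have hcY : ∀ z, Yp (Y z) = Y (Yp z) := by
    have h := hYp4
    rw [LinearMap.adjoint_comp, hYpsa, hYsa] at h
    exact fun z => LinearMap.ext_iff.mp h z
  have hYpos : ∀ v : H, 0 ≤ RCLike.re (inner 𝕂 v (Y v) : 𝕂) :=
    fun v => le_trans (hXpos v) (hXY v)
  -- ker Y ⊆ ker X always
  have hkerYX : ∀ v : H, Y v = 0 → X v = 0 := by
    intro v hv
    apply pos_inner_zero_aux X hXsa hXpos
    have h := hXY v
    rw [hv] at h
    simpa using h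
  constructor
  · -- Yp ≤ Xp → ker Y = ker X
    intro hle
    ext v
    simp only [LinearMap.mem_ker]
    constructor
    · exact hkerYX v
    · intro hx
      -- Xp v = 0
      have hXpv : Xp v = 0 := by
        have : Xp v = Xp (Xp (X v)) := by rw [hcX, hXp1p]
        rw [this, hx, map_zero, map_zero]
      have h1 : RCLike.re (inner 𝕂 v (Yp v) : 𝕂) ≤ 0 := by
        have h := hle v
        rw [hXpv] at h
        simpa using h
      -- Yp positive semidefinite
      have hYppos : ∀ w : H, 0 ≤ RCLike.re (inner 𝕂 w (Yp w) : 𝕂) := by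
        intro w
        have key : (inner 𝕂 w (Yp w) : 𝕂) = inner 𝕂 (Yp w) (Y (Yp w)) := by
          conv_lhs => rw [← hYp1p w]
          rw [← LinearMap.adjoint_inner_left Yp (Y (Yp w)) w, hYpsa]
        rw [key]
        exact hYpos (Yp w)
      have hYpv0 : Yp v = 0 := pos_inner_zero_aux Yp hYpsa hYppos v h1
      have : Y v = Y (Y (Yp v)) := by rw [← hYp2p v, hcY]
      rw [this, hYpv0, map_zero, map_zero]
  · -- ker Y = ker X → Yp ≤ Xp
    intro hker v
    -- X∘Xp fixes range of Y
    have hkerXY : ∀ z : H, X z = 0 → Y z = 0 := by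
      intro z hz
      have : z ∈ LinearMap.ker Y := by
        rw [hker, LinearMap.mem_ker]; exact hz
      exact this
    have hYfixop : Y ∘ₗ (X ∘ₗ Xp) = Y := by
      apply LinearMap.ext; intro z
      simp only [LinearMap.comp_apply]
      have hX0 : X (z - X (Xp z)) = 0 := by
        rw [map_sub, ← hcX z, hXp2p]
        simp
      have hY0 : Y (z - X (Xp z)) = 0 := hkerXY _ hX0
      rw [map_sub, sub_eq_zero] at hY0
      exact hY0.symm
    have hYfix : ∀ z, X (Xp (Y z)) = Y z := by
      have h := congrArg LinearMap.adjoint hYfixop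
      rw [LinearMap.adjoint_comp, hXp4, hYsa] at h
      exact fun z => LinearMap.ext_iff.mp h z
    have hfixYp : ∀ z, X (Xp (Yp z)) = Yp z := by
      intro z
      have h0 : Yp z = Y (Yp (Yp z)) := by
        conv_lhs => rw [← hYp1p z, hcY (Yp z)]
      rw [h0]
      exact hYfix _
    -- main inequality
    have hexp : 0 ≤ RCLike.re (inner 𝕂 (Xp v - Yp v) (X (Xp v - Yp v)) : 𝕂) :=
      hXpos (Xp v - Yp v)
    have hexpand : (inner 𝕂 (Xp v - Yp v) (X (Xp v - Yp v)) : 𝕂)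
        = inner 𝕂 (Xp v) (X (Xp v)) - inner 𝕂 (Xp v) (X (Yp v))
          - inner 𝕂 (Yp v) (X (Xp v)) + inner 𝕂 (Yp v) (X (Yp v)) := by
      rw [map_sub, inner_sub_left, inner_sub_right, inner_sub_right]
      ring
    rw [hexpand] at hexp
    simp only [map_add, map_sub] at hexp
    -- identities
    have moveXp : ∀ (a b : H), (inner 𝕂 a (Xp b) : 𝕂) = inner 𝕂 (Xp a) b := by
      intro a b
      rw [← LinearMap.adjoint_inner_left Xp b a, hXpsa]
    have moveYp : ∀ (a b : H), (inner 𝕂 a (Yp b) : 𝕂) = inner 𝕂 (Yp a) b := by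
      intro a b
      rw [← LinearMap.adjoint_inner_left Yp b a, hYpsa]
    have moveX : ∀ (a b : H), (inner 𝕂 a (X b) : 𝕂) = inner 𝕂 (X a) b := by
      intro a b
      rw [← LinearMap.adjoint_inner_left X b a, hXsa]
    have I1 : RCLike.re (inner 𝕂 (Xp v) (X (Xp v)) : 𝕂)
        = RCLike.re (inner 𝕂 v (Xp v) : 𝕂) := by
      rw [← moveXp v (X (Xp v)), hXp1p]
    have I2 : RCLike.re (inner 𝕂 (Xp v) (X (Yp v)) : 𝕂)
        = RCLike.re (inner 𝕂 (Yp v) (X (Xp v)) : 𝕂) := by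
      rw [moveX (Xp v) (Yp v), inner_re_symm]
    have I3 : RCLike.re (inner 𝕂 (Yp v) (X (Xp v)) : 𝕂)
        = RCLike.re (inner 𝕂 v (Yp v) : 𝕂) := by
      have h : (inner 𝕂 (Yp v) (X (Xp v)) : 𝕂) = inner 𝕂 (Yp v) v := by
        rw [moveX (Yp v) (Xp v), moveXp (X (Yp v)) v, hcX, hfixYp]
      rw [h, inner_re_symm]
    have I4 : RCLike.re (inner 𝕂 (Yp v) (X (Yp v)) : 𝕂)
        ≤ RCLike.re (inner 𝕂 v (Yp v) : 𝕂) := by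
      have h := hXY (Yp v)
      have h2 : (inner 𝕂 (Yp v) (Y (Yp v)) : 𝕂) = inner 𝕂 v (Yp v) := by
        rw [← moveYp v (Y (Yp v)), hYp1p]
      rw [h2] at h
      exact h
    linarith [hexp, I1, I2, I3, I4]
end

section
/- Let 𝒜, ℬ, 𝒞 be finite-dimensional inner product spaces over 𝕂 (𝕂 = ℝ or ℂ), and let U : 𝒜 → ℬ and T : ℬ → 𝒞 be linear maps with T ∘ U = 0. Then ℬ is the internal orthogonal direct sum ℬ = ran T* ⊕ ker(T*T + UU*) ⊕ ran U of three mutually orthogonal subspaces; moreover ran(T*T + UU*) = ran T* ⊕ ran U and ker(T*T + UU*) = ker T ∩ ker U*. -/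
lemma ortho_range_adjoint
    {𝕂 : Type*} [RCLike 𝕂]
    {E : Type*} [NormedAddCommGroup E] [InnerProductSpace 𝕂 E] [FiniteDimensional 𝕂 E]
    {F : Type*} [NormedAddCommGroup F] [InnerProductSpace 𝕂 F] [FiniteDimensional 𝕂 F]
    (A : E →ₗ[𝕂] F) : (LinearMap.range (LinearMap.adjoint A))ᗮ = LinearMap.ker A := by
  ext x
  simp only [Submodule.mem_orthogonal, LinearMap.mem_ker]
  constructor
  · intro h
    have hy : ∀ y : F, (inner 𝕂 (y) (A x) : 𝕂) = 0 := by
      intro y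
      rw [← LinearMap.adjoint_inner_left]
      exact h _ ⟨y, rfl⟩
    exact inner_self_eq_zero.mp (hy (A x))
  · rintro h u ⟨y, rfl⟩
    rw [LinearMap.adjoint_inner_left, h, inner_zero_right]

lemma range_adjoint_eq
    {𝕂 : Type*} [RCLike 𝕂]
    {E : Type*} [NormedAddCommGroup E] [InnerProductSpace 𝕂 E] [FiniteDimensional 𝕂 E]
    {F : Type*} [NormedAddCommGroup F] [InnerProductSpace 𝕂 F] [FiniteDimensional 𝕂 F]
    (A : E →ₗ[𝕂] F) : LinearMap.range (LinearMap.adjoint A) = (LinearMap.ker A)ᗮ := by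
  rw [← ortho_range_adjoint A, Submodule.orthogonal_orthogonal]

/-- Abstract Hodge decomposition: for finite-dimensional inner product
spaces `𝓐, 𝓑, 𝓒` and linear maps `U : 𝓐 → 𝓑`, `T : 𝓑 → 𝓒` with `T ∘ U = 0`, the space `𝓑`
is the internal orthogonal direct sum `ran T* ⊕ ker(T*T + UU*) ⊕ ran U` of three mutually
orthogonal subspaces; moreover `ran(T*T + UU*) = ran T* ⊕ ran U` and
`ker(T*T + UU*) = ker T ∩ ker U*`. -/
theorem stmt_16
    {𝕂 : Type*} [RCLike 𝕂]
    {𝓐 : Type*} [NormedAddCommGroup 𝓐] [InnerProductSpace 𝕂 𝓐] [FiniteDimensional 𝕂 𝓐]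
    {𝓑 : Type*} [NormedAddCommGroup 𝓑] [InnerProductSpace 𝕂 𝓑] [FiniteDimensional 𝕂 𝓑]
    {𝓒 : Type*} [NormedAddCommGroup 𝓒] [InnerProductSpace 𝕂 𝓒] [FiniteDimensional 𝕂 𝓒]
    (U : 𝓐 →ₗ[𝕂] 𝓑) (T : 𝓑 →ₗ[𝕂] 𝓒) (hTU : T ∘ₗ U = 0) :
    Submodule.IsOrtho (LinearMap.range (LinearMap.adjoint T))
      (LinearMap.ker (LinearMap.adjoint T ∘ₗ T + U ∘ₗ LinearMap.adjoint U)) ∧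
    Submodule.IsOrtho (LinearMap.range (LinearMap.adjoint T)) (LinearMap.range U) ∧
    Submodule.IsOrtho
      (LinearMap.ker (LinearMap.adjoint T ∘ₗ T + U ∘ₗ LinearMap.adjoint U))
      (LinearMap.range U) ∧
    (LinearMap.range (LinearMap.adjoint T) ⊔
        LinearMap.ker (LinearMap.adjoint T ∘ₗ T + U ∘ₗ LinearMap.adjoint U) ⊔
        LinearMap.range U = ⊤) ∧
    (LinearMap.range (LinearMap.adjoint T ∘ₗ T + U ∘ₗ LinearMap.adjoint U) =
      LinearMap.range (LinearMap.adjoint T) ⊔ LinearMap.range U) ∧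
    (LinearMap.ker (LinearMap.adjoint T ∘ₗ T + U ∘ₗ LinearMap.adjoint U) =
      LinearMap.ker T ⊓ LinearMap.ker (LinearMap.adjoint U)) := by
  set L : 𝓑 →ₗ[𝕂] 𝓑 := LinearMap.adjoint T ∘ₗ T + U ∘ₗ LinearMap.adjoint U with hL
  -- kernel characterization
  have hker : LinearMap.ker L = LinearMap.ker T ⊓ LinearMap.ker (LinearMap.adjoint U) := by
    ext x
    simp only [LinearMap.mem_ker, Submodule.mem_inf, hL, LinearMap.add_apply,
      LinearMap.comp_apply]
    constructor
    · intro h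
      have key : (inner 𝕂 (x) (LinearMap.adjoint T (T x) + U (LinearMap.adjoint U x)) : 𝕂) = 0 := by
        rw [h, inner_zero_right]
      have h2 : (inner 𝕂 (x) (U (LinearMap.adjoint U x)) : 𝕂)
          = (inner 𝕂 (LinearMap.adjoint U x) (LinearMap.adjoint U x) : 𝕂) := by
        simpa [LinearMap.adjoint_adjoint] using
          LinearMap.adjoint_inner_right (LinearMap.adjoint U) x (LinearMap.adjoint U x)
      rw [inner_add_right, LinearMap.adjoint_inner_right, h2,
        inner_self_eq_norm_sq_to_K, inner_self_eq_norm_sq_to_K] at key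
      have key' : (‖T x‖ ^ 2 + ‖LinearMap.adjoint U x‖ ^ 2 : ℝ) = 0 := by
        exact_mod_cast key
      have hT0 : ‖T x‖ = 0 := by nlinarith [sq_nonneg ‖T x‖, sq_nonneg ‖LinearMap.adjoint U x‖]
      have hU0 : ‖LinearMap.adjoint U x‖ = 0 := by nlinarith [sq_nonneg ‖T x‖]
      exact ⟨norm_eq_zero.mp hT0, norm_eq_zero.mp hU0⟩
    · rintro ⟨h1, h2⟩
      rw [h1, h2, map_zero, map_zero, add_zero]
  -- self-adjointness of L
  have hLsa : LinearMap.adjoint L = L := by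
    rw [hL, map_add, LinearMap.adjoint_comp, LinearMap.adjoint_comp,
      LinearMap.adjoint_adjoint, LinearMap.adjoint_adjoint]
  -- range U = range (adjoint (adjoint U))
  have hranU : LinearMap.range U = (LinearMap.ker (LinearMap.adjoint U))ᗮ := by
    conv_lhs => rw [← LinearMap.adjoint_adjoint U]
    exact range_adjoint_eq _
  -- range of sum
  have hsup : LinearMap.range (LinearMap.adjoint T) ⊔ LinearMap.range U
      = (LinearMap.ker L)ᗮ := by
    rw [hker, range_adjoint_eq, hranU]
    have h := Submodule.inf_orthogonal (LinearMap.ker T)ᗮ (LinearMap.ker (LinearMap.adjoint U))ᗮ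
    rw [Submodule.orthogonal_orthogonal, Submodule.orthogonal_orthogonal] at h
    rw [h]
    exact (Submodule.orthogonal_orthogonal _).symm
  refine ⟨?_, ?_, ?_, ?_, ?_, hker⟩
  · -- ran T* ⟂ ker L
    rw [Submodule.isOrtho_iff_inner_eq]
    rintro u ⟨y, rfl⟩ v hv
    rw [hker] at hv
    rw [LinearMap.adjoint_inner_left, hv.1, inner_zero_right]
  · -- ran T* ⟂ ran U
    rw [Submodule.isOrtho_iff_inner_eq]
    rintro u ⟨y, rfl⟩ v ⟨a, rfl⟩
    rw [LinearMap.adjoint_inner_left]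
    have : T (U a) = 0 := by
      have := congrFun (congrArg DFunLike.coe hTU) a
      simpa using this
    rw [this, inner_zero_right]
  · -- ker L ⟂ ran U
    rw [Submodule.isOrtho_iff_inner_eq]
    rintro u hu v ⟨a, rfl⟩
    rw [hker] at hu
    conv_lhs => rw [← LinearMap.adjoint_adjoint U]
    rw [LinearMap.adjoint_inner_right, hu.2, inner_zero_left]
  · -- sup = ⊤
    have : LinearMap.range (LinearMap.adjoint T) ⊔ LinearMap.ker L ⊔ LinearMap.range U
        = (LinearMap.ker L)ᗮ ⊔ LinearMap.ker L := by
      rw [← hsup]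
      rw [sup_assoc, sup_comm (LinearMap.ker L), ← sup_assoc]
    rw [this, sup_comm]
    exact Submodule.sup_orthogonal_of_hasOrthogonalProjection
  · -- range L
    have : LinearMap.range L = (LinearMap.ker L)ᗮ := by
      conv_lhs => rw [← hLsa]
      exact range_adjoint_eq L
    rw [this, hsup]
end

section
/- Let (P, Eg, σ) be an electrical network on a finite linear digraph without loops (so σ is a self-adjoint positive-semidefinite linear operator on F(Eg,𝕂)), let P = P∂ ∪ P° be a partition of the nodes into nonempty disjoint sets of boundary and interior nodes, and let Kσ = −D•σD. Set H₀ = {u ∈ F(P,𝕂) : u vanishes on P°} and H₁ = {u ∈ F(P,𝕂) : u vanishes on P∂}, with blocks (Kσ)ᵢⱼ of Kσ taken with respect to the orthogonal decomposition F(P,𝕂) = H₀ ⊕ H₁. Then: Kσ is self-adjoint and positive semidefinite; for every f ∈ F(P∂,𝕂) there exists u ∈ F(P,𝕂) with (Kσu)(p) = 0 for all p ∈ P° and u(p) = f(p) for all p ∈ P∂; and for any such u, the boundary current satisfies (Kσu)|_{P∂} = ι₀*((Kσ)₀₀ − (Kσ)₀₁((Kσ)₁₁)⁺(Kσ)₁₀)ι₀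 f, where ι₀ : F(P∂,𝕂) → F(P,𝕂) is extension by zero (with range H₀), ι₀* is its adjoint (restriction to P∂), and ⁺ is the Moore–Penrose pseudoinverse. -/
open scoped ComplexConjugate


open scoped ComplexConjugate

lemma aux_Dadj {𝕂 : Type*} [RCLike 𝕂] {P Eg : Type*} [Fintype P] [Fintype Eg] [DecidableEq P]
    (em ep : Eg → P)
    (D : EuclideanSpace 𝕂 P →ₗ[𝕂] EuclideanSpace 𝕂 Eg)
    (hD : ∀ (f : EuclideanSpace 𝕂 P) (e : Eg), D f e = f (ep e) - f (em e))
    (Ddiv : EuclideanSpace 𝕂 Eg →ₗ[𝕂] EuclideanSpace 𝕂 P)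
    (hDdiv : ∀ (g : EuclideanSpace 𝕂 Eg) (p : P),
      Ddiv g p = (∑ e ∈ Finset.univ.filter (fun e => em e = p), g e) -
        ∑ e ∈ Finset.univ.filter (fun e => ep e = p), g e) :
    (-Ddiv) = LinearMap.adjoint D := by
  rw [LinearMap.eq_adjoint_iff]
  intro g u
  have key : ∀ (h : Eg → 𝕂) (v : P → 𝕂) (m : Eg → P),
      ∑ p, (∑ e ∈ Finset.univ.filter (fun e => m e = p), h e) * v p
        = ∑ e, h e * v (m e) := by
    intro h v m
    rw [← Finset.sum_fiberwise (Finset.univ : Finset Eg) m (fun e => h e * v (m e))]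
    refine Finset.sum_congr rfl fun p _ => ?_
    rw [Finset.sum_mul]
    refine Finset.sum_congr rfl fun e he => ?_
    rw [(Finset.mem_filter.mp he).2]
  calc (inner 𝕂 ((-Ddiv) g) u : 𝕂)
      = ∑ p, ((∑ e ∈ Finset.univ.filter (fun e => ep e = p), conj (g e)) -
          ∑ e ∈ Finset.univ.filter (fun e => em e = p), conj (g e)) * u p := by
        simp only [PiLp.inner_apply, RCLike.inner_apply, LinearMap.neg_apply]
        refine Finset.sum_congr rfl fun p _ => ?_
        have : ((-(Ddiv g)) : EuclideanSpace 𝕂 P) p = -(Ddiv g p) := rfl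
        rw [this, hDdiv, map_neg, map_sub, map_sum, map_sum, neg_sub, mul_comm]
    _ = (∑ e, conj (g e) * u (ep e)) - ∑ e, conj (g e) * u (em e) := by
        simp only [sub_mul, Finset.sum_sub_distrib]
        rw [key, key]
    _ = (inner 𝕂 g (D u) : 𝕂) := by
        simp only [PiLp.inner_apply, RCLike.inner_apply]
        rw [← Finset.sum_sub_distrib]
        refine Finset.sum_congr rfl fun e _ => ?_
        rw [hD]
        ring

open scoped ComplexConjugate

lemma aux_psd_cancel {𝕂 : Type*} [RCLike 𝕂] {E : Type*} [NormedAddCommGroup E]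
    [InnerProductSpace 𝕂 E]
    (σ : E →ₗ[𝕂] E) (hsym : ∀ x y : E, (inner 𝕂 (σ x) y : 𝕂) = inner 𝕂 x (σ y))
    (hpos : ∀ g : E, 0 ≤ RCLike.re (inner 𝕂 g (σ g) : 𝕂))
    (x : E) (hx : RCLike.re (inner 𝕂 x (σ x) : 𝕂) = 0) : σ x = 0 := by
  have key : ∀ y : E, (inner 𝕂 y (σ x) : 𝕂) = 0 := by
    intro y
    set s : 𝕂 := inner 𝕂 y (σ x) with hs
    set n : ℝ := ‖s‖ ^ 2 with hn
    set M : ℝ := RCLike.re (inner 𝕂 y (σ y) : 𝕂) with hM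
    have hn0 : 0 ≤ n := by positivity
    have hM0 : 0 ≤ M := hpos y
    have hs' : (inner 𝕂 x (σ y) : 𝕂) = conj s := by
      rw [hs, ← hsym y x, ← inner_conj_symm]
    have expand : ∀ c : 𝕂, (inner 𝕂 (x + c • y) (σ (x + c • y)) : 𝕂) =
        inner 𝕂 x (σ x) + c * conj s + conj c * s + conj c * (c * (inner 𝕂 y (σ y) : 𝕂)) := by
      intro c
      simp only [map_add, map_smul, inner_add_left, inner_add_right, inner_smul_left,
        inner_smul_right, hs']
      ring
    have quad : ∀ t : ℝ, 0 ≤ 2 * t * n + t ^ 2 * (n * M) := by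
      intro t
      have h0 := hpos (x + ((t : 𝕂) * s) • y)
      rw [expand] at h0
      have e1 : ((t : 𝕂) * s) * conj s = ((t * n : ℝ) : 𝕂) := by
        rw [mul_assoc, RCLike.mul_conj, hn]; push_cast; ring
      have e2 : conj ((t : 𝕂) * s) * s = ((t * n : ℝ) : 𝕂) := by
        rw [map_mul, RCLike.conj_ofReal, mul_assoc, RCLike.conj_mul, hn]; push_cast; ring
      have e3 : conj ((t : 𝕂) * s) * (((t : 𝕂) * s) * (inner 𝕂 y (σ y) : 𝕂)) =
          ((t ^ 2 * n : ℝ) : 𝕂) * (inner 𝕂 y (σ y) : 𝕂) := by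
        rw [map_mul, RCLike.conj_ofReal]
        have : (t : 𝕂) * conj s * ((t : 𝕂) * s * (inner 𝕂 y (σ y) : 𝕂)) =
            ((t : 𝕂) * (t : 𝕂)) * (conj s * s) * (inner 𝕂 y (σ y) : 𝕂) := by ring
        rw [this, RCLike.conj_mul, hn]; push_cast; ring
      rw [e1, e2, e3] at h0
      simp only [map_add, RCLike.ofReal_re, RCLike.re_ofReal_mul, hx] at h0
      rw [← hM] at h0
      nlinarith [h0]
    have hn_eq : n = 0 := by
      by_contra hne
      have hn' : 0 < n := lt_of_le_of_ne hn0 (Ne.symm hne)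
      have h1M : (0:ℝ) < 1 + M := by linarith
      have key2 := quad (-(1 / (1 + M)))
      have e : 2 * (-(1 / (1 + M))) * n + (-(1 / (1 + M))) ^ 2 * (n * M)
          = -(n * (2 + M)) / (1 + M) ^ 2 := by
        field_simp
        ring
      rw [e] at key2
      have hpow : (0:ℝ) < (1 + M) ^ 2 := by positivity
      have h3 : 0 ≤ -(n * (2 + M)) := by
        rcases div_nonneg_iff.mp key2 with ⟨h, _⟩ | ⟨_, h⟩
        · exact h
        · nlinarith
      nlinarith [hn', hM0]
    have : ‖s‖ = 0 := by
      have := hn_eq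
      rw [hn] at this
      nlinarith [norm_nonneg s]
    rw [hs] at *
    exact norm_eq_zero.mp this
  have := key (σ x)
  exact inner_self_eq_zero.mp this



/-- Schur-complement representation of the Dirichlet-to-Neumann map of
an electrical network `(P, Eg, σ)` on a finite linear digraph without loops, with
boundary nodes `Pb` and interior nodes `Pbᶜ` (both nonempty).  Here `D` is the discrete
gradient, `Ddiv` the discrete divergence, `Kσ = -D•σD` the Kirchhoff operator, `Γ0, Γ1`
the orthogonal projections onto `H₀` (functions vanishing on the interior) and `H₁`
(functions vanishing on the boundary), `ι0` the extension-by-zero map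
`F(P∂,𝕂) → F(P,𝕂)` (whose adjoint is restriction to the boundary), and `B` the
Moore–Penrose pseudoinverse of the block `(Kσ)₁₁ = Γ1 Kσ Γ1`.  Then `Kσ` is self-adjoint
and positive semidefinite, the discrete Dirichlet problem is solvable for every boundary
datum `f`, and for any solution `u` the boundary current is
`(Kσ u)|_{P∂} = ι0*((Kσ)₀₀ - (Kσ)₀₁((Kσ)₁₁)⁺(Kσ)₁₀) ι0 f`. -/
theorem stmt_19
    {𝕂 : Type*} [RCLike 𝕂]
    {P Eg : Type*} [Fintype P] [Nonempty P] [Fintype Eg] [Nonempty Eg] [DecidableEq P]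
    (em ep : Eg → P) (hloop : ∀ e, em e ≠ ep e)
    (Pb : Set P) [DecidablePred (· ∈ Pb)] (hPb : Pb.Nonempty) (hPi : Pbᶜ.Nonempty)
    -- the network conductivity: self-adjoint and positive semidefinite
    (σ : EuclideanSpace 𝕂 Eg →ₗ[𝕂] EuclideanSpace 𝕂 Eg)
    (hσsa : LinearMap.adjoint σ = σ)
    (hσpos : ∀ g : EuclideanSpace 𝕂 Eg, 0 ≤ RCLike.re (inner 𝕂 g (σ g) : 𝕂))
    -- discrete gradient and divergence
    (D : EuclideanSpace 𝕂 P →ₗ[𝕂] EuclideanSpace 𝕂 Eg)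
    (hD : ∀ (f : EuclideanSpace 𝕂 P) (e : Eg), D f e = f (ep e) - f (em e))
    (Ddiv : EuclideanSpace 𝕂 Eg →ₗ[𝕂] EuclideanSpace 𝕂 P)
    (hDdiv : ∀ (g : EuclideanSpace 𝕂 Eg) (p : P),
      Ddiv g p = (∑ e ∈ Finset.univ.filter (fun e => em e = p), g e) -
        ∑ e ∈ Finset.univ.filter (fun e => ep e = p), g e)
    -- the Kirchhoff operator `Kσ = -D•σD`
    (Kσ : EuclideanSpace 𝕂 P →ₗ[𝕂] EuclideanSpace 𝕂 P)
    (hKσ : Kσ = -(Ddiv ∘ₗ (σ ∘ₗ D)))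
    -- the orthogonal projections onto `H₀ = ker (·|_{P°})` and `H₁ = ker (·|_{P∂})`
    (Γ0 Γ1 : EuclideanSpace 𝕂 P →ₗ[𝕂] EuclideanSpace 𝕂 P)
    (hΓ0 : ∀ (u : EuclideanSpace 𝕂 P) (p : P), Γ0 u p = if p ∈ Pb then u p else 0)
    (hΓ1 : ∀ (u : EuclideanSpace 𝕂 P) (p : P), Γ1 u p = if p ∈ Pb then 0 else u p)
    -- the extension-by-zero map `ι0 : F(P∂,𝕂) → F(P,𝕂)`
    (ι0 : EuclideanSpace 𝕂 ↥Pb →ₗ[𝕂] EuclideanSpace 𝕂 P)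
    (hι0 : ∀ (f : EuclideanSpace 𝕂 ↥Pb) (p : P),
      ι0 f p = if hp : p ∈ Pb then f ⟨p, hp⟩ else 0)
    -- `B = ((Kσ)₁₁)⁺`, the Moore–Penrose pseudoinverse of `(Kσ)₁₁ = Γ1 Kσ Γ1`
    (B : EuclideanSpace 𝕂 P →ₗ[𝕂] EuclideanSpace 𝕂 P)
    (hB1 : B ∘ₗ ((Γ1 ∘ₗ (Kσ ∘ₗ Γ1)) ∘ₗ B) = B)
    (hB2 : (Γ1 ∘ₗ (Kσ ∘ₗ Γ1)) ∘ₗ (B ∘ₗ (Γ1 ∘ₗ (Kσ ∘ₗ Γ1))) = Γ1 ∘ₗ (Kσ ∘ₗ Γ1))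
    (hB3 : LinearMap.adjoint (B ∘ₗ (Γ1 ∘ₗ (Kσ ∘ₗ Γ1))) = B ∘ₗ (Γ1 ∘ₗ (Kσ ∘ₗ Γ1)))
    (hB4 : LinearMap.adjoint ((Γ1 ∘ₗ (Kσ ∘ₗ Γ1)) ∘ₗ B) = (Γ1 ∘ₗ (Kσ ∘ₗ Γ1)) ∘ₗ B) :
    LinearMap.adjoint Kσ = Kσ ∧
    (∀ u : EuclideanSpace 𝕂 P, 0 ≤ RCLike.re (inner 𝕂 u (Kσ u) : 𝕂)) ∧
    ∀ f : EuclideanSpace 𝕂 ↥Pb,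
      (∃ u : EuclideanSpace 𝕂 P,
        (∀ p : P, p ∉ Pb → Kσ u p = 0) ∧ (∀ (p : P) (hp : p ∈ Pb), u p = f ⟨p, hp⟩)) ∧
      (∀ u : EuclideanSpace 𝕂 P,
        (∀ p : P, p ∉ Pb → Kσ u p = 0) → (∀ (p : P) (hp : p ∈ Pb), u p = f ⟨p, hp⟩) →
        (LinearMap.adjoint ι0) (Kσ u) =
          (LinearMap.adjoint ι0)
            (((Γ0 ∘ₗ (Kσ ∘ₗ Γ0)) -
              (Γ0 ∘ₗ (Kσ ∘ₗ Γ1)) ∘ₗ (B ∘ₗ (Γ1 ∘ₗ (Kσ ∘ₗ Γ0)))) (ι0 f))) := by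
  classical
  have hDadj : (-Ddiv) = LinearMap.adjoint D := aux_Dadj em ep D hD Ddiv hDdiv
  have hKform : Kσ = LinearMap.adjoint D ∘ₗ (σ ∘ₗ D) := by
    rw [hKσ, ← hDadj, LinearMap.neg_comp]
  have hKinner : ∀ u v : EuclideanSpace 𝕂 P,
      (inner 𝕂 u (Kσ v) : 𝕂) = inner 𝕂 (D u) (σ (D v)) := by
    intro u v
    rw [hKform]
    simp only [LinearMap.comp_apply]
    rw [LinearMap.adjoint_inner_right]
  have hσsym : ∀ x y : EuclideanSpace 𝕂 Eg, (inner 𝕂 (σ x) y : 𝕂) = inner 𝕂 x (σ y) := by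
    intro x y
    conv_lhs => rw [← hσsa]
    exact LinearMap.adjoint_inner_left σ y x
  -- Part 1: self-adjointness
  have hKsa : LinearMap.adjoint Kσ = Kσ := by
    rw [hKform]
    simp only [LinearMap.adjoint_comp, LinearMap.adjoint_adjoint, hσsa]
    rw [LinearMap.comp_assoc]
  have hKsym : ∀ x y : EuclideanSpace 𝕂 P, (inner 𝕂 (Kσ x) y : 𝕂) = inner 𝕂 x (Kσ y) := by
    intro x y
    conv_lhs => rw [← hKsa]
    exact LinearMap.adjoint_inner_left Kσ y x
  -- Part 2: positivity
  have hKpos : ∀ u : EuclideanSpace 𝕂 P, 0 ≤ RCLike.re (inner 𝕂 u (Kσ u) : 𝕂) := by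
    intro u
    rw [hKinner]
    exact hσpos (D u)
  -- Γ facts
  have hΓ1sym : ∀ x y : EuclideanSpace 𝕂 P, (inner 𝕂 (Γ1 x) y : 𝕂) = inner 𝕂 x (Γ1 y) := by
    intro x y
    simp only [PiLp.inner_apply, RCLike.inner_apply, hΓ1]
    refine Finset.sum_congr rfl fun p _ => ?_
    split <;> simp
  have hΓ1Γ1 : ∀ v : EuclideanSpace 𝕂 P, Γ1 (Γ1 v) = Γ1 v := by
    intro v
    ext p
    rw [hΓ1, hΓ1]
    split <;> rfl
  have hsum : ∀ v : EuclideanSpace 𝕂 P, Γ0 v + Γ1 v = v := by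
    intro v
    ext p
    show Γ0 v p + Γ1 v p = v p
    rw [hΓ0, hΓ1]
    split <;> simp
  have hΓ0ι : ∀ h : EuclideanSpace 𝕂 ↥Pb, Γ0 (ι0 h) = ι0 h := by
    intro h
    ext p
    by_cases h : p ∈ Pb <;> simp [hΓ0, hι0, h]
  -- the block `A = (Kσ)₁₁`
  set A : EuclideanSpace 𝕂 P →ₗ[𝕂] EuclideanSpace 𝕂 P := Γ1 ∘ₗ (Kσ ∘ₗ Γ1) with hA
  have hAapp : ∀ x : EuclideanSpace 𝕂 P, A x = Γ1 (Kσ (Γ1 x)) := fun x => rfl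
  have hΓ1A : ∀ x : EuclideanSpace 𝕂 P, Γ1 (A x) = A x := by
    intro x
    rw [hAapp, hΓ1Γ1]
  have hAΓ1 : ∀ x : EuclideanSpace 𝕂 P, A (Γ1 x) = A x := by
    intro x
    rw [hAapp, hAapp, hΓ1Γ1]
  have hΓ1adj : LinearMap.adjoint Γ1 = Γ1 :=
    ((LinearMap.eq_adjoint_iff Γ1 Γ1).mpr hΓ1sym).symm
  have hAsa : LinearMap.adjoint A = A := by
    rw [hA]
    simp only [LinearMap.adjoint_comp, hΓ1adj, hKsa]
    rw [LinearMap.comp_assoc]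
  -- A ∘ (A ∘ B) = A
  have hAAB : ∀ x : EuclideanSpace 𝕂 P, A (A (B x)) = A x := by
    have h1 : (A ∘ₗ B) ∘ₗ A = A := by rw [LinearMap.comp_assoc]; exact hB2
    have h2 := congrArg LinearMap.adjoint h1
    rw [LinearMap.adjoint_comp, hB4, hAsa] at h2
    intro x
    exact LinearMap.ext_iff.mp h2 x
  -- cancellation: interior-supported harmonic implies Kσ-null
  have L1 : ∀ z : EuclideanSpace 𝕂 P, Γ1 z = z → Γ1 (Kσ z) = 0 → Kσ z = 0 := by
    intro z h1 h2
    have hzero : RCLike.re (inner 𝕂 (D z) (σ (D z)) : 𝕂) = 0 := by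
      have e : (inner 𝕂 z (Kσ z) : 𝕂) = 0 := by
        calc (inner 𝕂 z (Kσ z) : 𝕂) = inner 𝕂 (Γ1 z) (Kσ z) := by rw [h1]
          _ = inner 𝕂 z (Γ1 (Kσ z)) := hΓ1sym z (Kσ z)
          _ = 0 := by rw [h2, inner_zero_right]
      rw [← hKinner, e, map_zero]
    have hσz : σ (D z) = 0 := aux_psd_cancel σ hσsym hσpos (D z) hzero
    rw [hKform]
    simp only [LinearMap.comp_apply, hσz, map_zero]
  refine ⟨hKsa, hKpos, ?_⟩
  intro f
  -- the right-hand side of the interior equation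
  set b : EuclideanSpace 𝕂 P := -(Γ1 (Kσ (ι0 f))) with hb
  have hΓ1b : Γ1 b = b := by rw [hb, map_neg, hΓ1Γ1]
  -- solvability of the interior equation: A (B b) = b
  have hABb : A (B b) = b := by
    set c : EuclideanSpace 𝕂 P := b - A (B b) with hc
    have hAc : A c = 0 := by
      rw [hc, map_sub, hAAB, sub_self]
    have hΓ1c : Γ1 c = c := by
      rw [hc, map_sub, hΓ1b, hΓ1A]
    have hKc : Kσ c = 0 := by
      refine L1 c hΓ1c ?_
      conv_lhs => rw [← hΓ1c]
      exact hAc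
    have hcb : (inner 𝕂 c b : 𝕂) = 0 := by
      calc (inner 𝕂 c b : 𝕂) = -(inner 𝕂 c (Γ1 (Kσ (ι0 f)))) := by rw [hb, inner_neg_right]
        _ = -(inner 𝕂 (Γ1 c) (Kσ (ι0 f))) := by rw [← hΓ1sym]
        _ = -(inner 𝕂 (Kσ c) (ι0 f)) := by rw [hΓ1c, ← hKsym]
        _ = 0 := by rw [hKc, inner_zero_left, neg_zero]
    have hABc : A (B c) = 0 := by
      have hBc : B (A (B b)) = B b := LinearMap.ext_iff.mp hB1 b
      rw [hc, map_sub, map_sub, hBc, sub_self]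
    have hcc : (inner 𝕂 c c : 𝕂) = 0 := by
      have h1 : (inner 𝕂 (A (B b)) c : 𝕂) = 0 := by
        have : (inner 𝕂 (A (B b)) c : 𝕂) = inner 𝕂 b (A (B c)) := by
          have := LinearMap.adjoint_inner_left (A ∘ₗ B) c b
          rw [hB4] at this
          simpa [LinearMap.comp_apply] using this
        rw [this, hABc, inner_zero_right]
      have h2 : (inner 𝕂 b c : 𝕂) = 0 := by
        rw [← inner_conj_symm, hcb, map_zero]
      calc (inner 𝕂 c c : 𝕂) = inner 𝕂 (b - A (B b)) c := by rw [← hc]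
        _ = inner 𝕂 b c - inner 𝕂 (A (B b)) c := by rw [inner_sub_left]
        _ = 0 := by rw [h1, h2, sub_zero]
    have : c = 0 := inner_self_eq_zero.mp hcc
    have := sub_eq_zero.mp (hc ▸ this)
    exact this.symm
  constructor
  · -- existence
    refine ⟨ι0 f + Γ1 (B b), ?_, ?_⟩
    · intro p hp
      have hvec : Γ1 (Kσ (ι0 f + Γ1 (B b))) = 0 := by
        rw [map_add, map_add, ← hAapp, hABb, hb, add_neg_cancel]
      have := congrArg (fun v => v p) hvec
      rw [hΓ1] at this
      rw [if_neg hp] at this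
      exact this
    · intro p hp
      show ι0 f p + Γ1 (B b) p = f ⟨p, hp⟩
      rw [hι0, hΓ1, dif_pos hp, if_pos hp, add_zero]
  · -- the Schur-complement formula
    intro u hint hbnd
    have h1 : Γ1 (Kσ u) = 0 := by
      ext p
      rw [hΓ1]
      split
      · rfl
      · exact hint p (by assumption)
    have h0 : Γ0 u = ι0 f := by
      ext p
      rw [hΓ0, hι0]
      split_ifs with hp
      · exact hbnd p hp
      · rfl
    have hw : Γ1 u = u - ι0 f := by
      rw [← h0]
      have := hsum u
      ext p
      have := congrArg (fun v => v p) this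
      show Γ1 u p = u p - Γ0 u p
      have h' : Γ0 u p + Γ1 u p = u p := this
      linear_combination h'
    have hAw : A (Γ1 u) = b := by
      rw [hAΓ1, hAapp, hw, map_sub, map_sub, h1, zero_sub, ← hb]
    have hz : Kσ (Γ1 u - Γ1 (B b)) = 0 := by
      have hΓ1z : Γ1 (Γ1 u - Γ1 (B b)) = Γ1 u - Γ1 (B b) := by
        rw [map_sub, hΓ1Γ1, hΓ1Γ1]
      refine L1 _ hΓ1z ?_
      have : Γ1 (Kσ (Γ1 (Γ1 u - Γ1 (B b)))) = A (Γ1 u - Γ1 (B b)) := rfl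
      conv_lhs => rw [← hΓ1z]
      rw [this, map_sub, hAw, hAΓ1, hABb, sub_self]
    -- the key vector identity
    have hu' : u = ι0 f + Γ1 u := by rw [hw]; abel
    have esplit : Kσ (Γ1 u) = Kσ (Γ1 (B b)) + Kσ (Γ1 u - Γ1 (B b)) := by
      rw [← map_add]
      congr 1
      abel
    have hKu : Kσ u = Kσ (ι0 f) + Kσ (Γ1 (B b)) := by
      calc Kσ u = Kσ (ι0 f) + Kσ (Γ1 u) := by rw [← map_add, ← hu']
        _ = Kσ (ι0 f) + (Kσ (Γ1 (B b)) + Kσ (Γ1 u - Γ1 (B b))) := by rw [esplit]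
        _ = Kσ (ι0 f) + Kσ (Γ1 (B b)) := by rw [hz, add_zero]
    have hKu0 : Kσ u = Γ0 (Kσ u) := by
      have := hsum (Kσ u)
      rw [h1, add_zero] at this
      exact this.symm
    have hS : ((Γ0 ∘ₗ (Kσ ∘ₗ Γ0)) -
        (Γ0 ∘ₗ (Kσ ∘ₗ Γ1)) ∘ₗ (B ∘ₗ (Γ1 ∘ₗ (Kσ ∘ₗ Γ0)))) (ι0 f) = Kσ u := by
      simp only [LinearMap.sub_apply, LinearMap.comp_apply]
      rw [hΓ0ι]
      have e1 : Γ1 (Kσ (ι0 f)) = -b := by rw [hb, neg_neg]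
      rw [e1, map_neg, map_neg, map_neg, map_neg, sub_neg_eq_add]
      rw [← map_add, ← hKu]
      exact hKu0.symm
    rw [hS]
end
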